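/- arXiv:2109.08280 — 5 statements merged into one kernel-verified Lean document; each statement's English description precedes it below -/
import Mathlib

section
/- There exists a universal constant C > 0 (independent of m and n) such that for every matrix A ∈ ℝ^{m×n} and every matrix U ∈ ℝ^{n×n} with Frobenius norm satisfying ‖U‖_F² = n, if ξ is a standard Gaussian vector in ℝⁿ then disc_s(A) ≤ C · E‖A U ξ‖_∞. In other words, the spherical discrepancy is bounded, up to a universal constant, by the infimum of E‖Ag‖_∞ over centered Gaussian vectors g in ℝⁿ whose covariance matrix has trace n. -/
open MeasureTheory ProbabilityTheory
open scoped ENNReal NNReal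

/-- The ℓ∞ norm of a vector in ℝ^m. -/
noncomputable def supNorm {m : ℕ} (v : Fin m → ℝ) : ℝ := ⨆ i, |v i|

/-- The Euclidean norm of a vector in ℝ^n. -/
noncomputable def e2 {n : ℕ} (x : Fin n → ℝ) : ℝ := Real.sqrt (∑ j, x j ^ 2)

/-- The standard Gaussian measure on ℝ^n (i.i.d. N(0,1) coordinates). -/
noncomputable def stdGaussian (n : ℕ) : Measure (Fin n → ℝ) :=
  Measure.pi fun _ => gaussianReal 0 1

/-- Spherical discrepancy: min over x with ‖x‖₂ = √n of ‖Ax‖_∞. -/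
noncomputable def discS {m n : ℕ} (A : Matrix (Fin m) (Fin n) ℝ) : ℝ :=
  sInf { d | ∃ x : Fin n → ℝ, e2 x = Real.sqrt n ∧ d = supNorm (A.mulVec x) }

instance (n : ℕ) : IsProbabilityMeasure (stdGaussian n) := by
  unfold _root_.stdGaussian; infer_instance

namespace SD

/-! ### Products over pi measures -/

theorem integrable_pi_prod {μ : Measure ℝ} [IsProbabilityMeasure μ] :
    ∀ {n : ℕ} {f : Fin n → ℝ → ℝ}, (∀ i, Integrable (f i) μ) →
      Integrable (fun x : Fin n → ℝ => ∏ i, f i (x i)) (Measure.pi fun _ => μ) := by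
  intro n
  induction n with
  | zero =>
      intro f _
      simp only [Finset.univ_eq_empty, Finset.prod_empty]
      exact integrable_const 1
  | succ n ih =>
      intro f hf
      have hm := ((measurePreserving_piFinSuccAbove (fun _ : Fin (n + 1) => μ) 0).symm)
      rw [← hm.integrable_comp_emb (MeasurableEquiv.measurableEmbedding _)]
      simp_rw [MeasurableEquiv.piFinSuccAbove_symm_apply, Fin.insertNthEquiv,
        Fin.prod_univ_succ, Fin.insertNth_zero]
      simp only [Fin.zero_succAbove, Function.comp_def, Fin.cons_zero, Fin.cons_succ,
        Equiv.coe_fn_mk]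
      exact Integrable.mul_prod (hf 0) (ih fun i => hf _)

theorem integral_pi_prod {μ : Measure ℝ} [IsProbabilityMeasure μ] :
    ∀ {n : ℕ} (f : Fin n → ℝ → ℝ),
      ∫ x : Fin n → ℝ, ∏ i, f i (x i) ∂(Measure.pi fun _ => μ) = ∏ i, ∫ x, f i x ∂μ := by
  intro n
  induction n with
  | zero =>
      intro f
      simp only [Finset.univ_eq_empty, Finset.prod_empty, integral_const, measure_univ,
        ENNReal.toReal_one, probReal_univ, smul_eq_mul, mul_one, one_smul]
  | succ n ih =>
      intro f
      calc
        ∫ x : Fin (n + 1) → ℝ, ∏ i, f i (x i) ∂(Measure.pi fun _ => μ)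
            = ∫ x : ℝ × (Fin n → ℝ), f 0 x.1 * ∏ i : Fin n, f i.succ (x.2 i)
              ∂(μ.prod (Measure.pi fun _ => μ)) := by
          rw [← ((measurePreserving_piFinSuccAbove (fun _ : Fin (n + 1) => μ) 0).symm).integral_comp']
          refine integral_congr_ae (Filter.Eventually.of_forall fun x => ?_)
          simp [MeasurableEquiv.piFinSuccAbove_symm_apply, Fin.insertNthEquiv,
            Fin.prod_univ_succ, Fin.insertNth_zero, Fin.zero_succAbove]
        _ = (∫ x, f 0 x ∂μ) * ∏ i : Fin n, ∫ x, f i.succ x ∂μ := by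
          rw [← ih fun i => f i.succ, ← integral_prod_mul]
        _ = ∏ i, ∫ x, f i x ∂μ := by rw [Fin.prod_univ_succ]

end SD
/-! ### Moments of the standard Gaussian -/

namespace SD

noncomputable def gmoment (k : ℕ) : ℝ := ∫ x, x ^ k ∂(gaussianReal 0 1)

lemma gaussianPDFReal_zero_one (x : ℝ) :
    gaussianPDFReal 0 1 x = (Real.sqrt (2 * Real.pi))⁻¹ * Real.exp (-(1/2) * x ^ 2) := by
  unfold gaussianPDFReal
  norm_num
  left
  ring

lemma gaussianReal_eq_density :
    gaussianReal 0 1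
      = volume.withDensity fun x => ((gaussianPDFReal 0 1 x).toNNReal : ℝ≥0∞) :=
  gaussianReal_of_var_ne_zero 0 one_ne_zero

lemma integral_gaussianReal_eq (f : ℝ → ℝ) :
    ∫ x, f x ∂(gaussianReal 0 1) = ∫ x, gaussianPDFReal 0 1 x * f x := by
  rw [gaussianReal_eq_density,
    integral_withDensity_eq_integral_smul ((measurable_gaussianPDFReal 0 1).real_toNNReal)]
  refine integral_congr_ae (Filter.Eventually.of_forall fun x => ?_)
  simp [NNReal.smul_def, Real.coe_toNNReal _ (gaussianPDFReal_nonneg 0 1 x)]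

lemma integrable_gaussianReal_iff (f : ℝ → ℝ) :
    Integrable f (gaussianReal 0 1)
      ↔ Integrable (fun x => gaussianPDFReal 0 1 x * f x) volume := by
  rw [gaussianReal_eq_density,
    integrable_withDensity_iff_integrable_smul ((measurable_gaussianPDFReal 0 1).real_toNNReal)]
  have h : (fun x => ((gaussianPDFReal 0 1 x).toNNReal : ℝ≥0) • f x)
      = fun x => gaussianPDFReal 0 1 x * f x := by
    funext x
    simp [NNReal.smul_def, Real.coe_toNNReal _ (gaussianPDFReal_nonneg 0 1 x)]
  rw [h]

lemma integrable_pow_gaussianReal (k : ℕ) :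
    Integrable (fun x : ℝ => x ^ k) (gaussianReal 0 1) := by
  rw [integrable_gaussianReal_iff]
  have h : (fun x : ℝ => gaussianPDFReal 0 1 x * x ^ k)
      = fun x : ℝ => (Real.sqrt (2 * Real.pi))⁻¹ * (x ^ (k : ℝ) * Real.exp (-(1/2) * x ^ 2)) := by
    funext x
    rw [gaussianPDFReal_zero_one, Real.rpow_natCast]
    ring
  rw [h]
  exact (integrable_rpow_mul_exp_neg_mul_sq (by norm_num)
    (neg_one_lt_zero.trans_le (Nat.cast_nonneg k))).const_mul _

lemma gmoment_zero : gmoment 0 = 1 := by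
  simp [gmoment]

lemma gmoment_odd {k : ℕ} (hk : Odd k) : gmoment k = 0 := by
  unfold gmoment
  rw [integral_gaussianReal_eq]
  set g : ℝ → ℝ := fun x => gaussianPDFReal 0 1 x * x ^ k with hg
  have h1 : ∫ x, g (-x) = ∫ x, g x := integral_neg_eq_self g volume
  have h2 : ∀ x, g (-x) = -g x := by
    intro x
    rw [hg]
    simp only
    rw [gaussianPDFReal_zero_one, gaussianPDFReal_zero_one, hk.neg_pow, neg_sq]
    ring
  have h3 : ∫ x, g x = - ∫ x, g x := by
    calc ∫ x, g x = ∫ x, g (-x) := h1.symm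
      _ = ∫ x, -g x := integral_congr_ae (Filter.Eventually.of_forall fun x => h2 x)
      _ = - ∫ x, g x := integral_neg g
  linarith

lemma gmoment_one : gmoment 1 = 0 := gmoment_odd odd_one

lemma gmoment_three : gmoment 3 = 0 := gmoment_odd (by decide)

lemma integral_Ioi_pow_exp (k : ℕ) :
    ∫ x in Set.Ioi (0 : ℝ), x ^ k * Real.exp (-(1/2) * x ^ 2)
      = (1/2 : ℝ) ^ (-((k : ℝ) + 1) / 2) * (1 / 2) * Real.Gamma (((k : ℝ) + 1) / 2) := by
  have h := integral_rpow_mul_exp_neg_mul_rpow (p := 2) (q := (k : ℝ)) (b := 1/2)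
    two_pos (neg_one_lt_zero.trans_le (Nat.cast_nonneg k)) (by norm_num)
  have h2 : ∀ x : ℝ, x ^ ((k : ℝ)) * Real.exp (-(1/2) * x ^ (2 : ℝ))
      = x ^ k * Real.exp (-(1/2) * x ^ 2) := by
    intro x
    rw [show (2 : ℝ) = ((2 : ℕ) : ℝ) by norm_num, Real.rpow_natCast, Real.rpow_natCast]
  simp_rw [h2] at h
  exact h

lemma sqrt_two_pi_eq : Real.sqrt (2 * Real.pi) = Real.sqrt 2 * Real.sqrt Real.pi :=
  Real.sqrt_mul (by norm_num) _

lemma half_rpow (r : ℝ) : (1/2 : ℝ) ^ (-r) = (2 : ℝ) ^ r := by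
  rw [show (1/2 : ℝ) = 2⁻¹ by norm_num, Real.inv_rpow (by norm_num : (0:ℝ) ≤ 2),
    ← Real.rpow_neg (by norm_num : (0:ℝ) ≤ 2), neg_neg]

lemma two_rpow_three_half : (2 : ℝ) ^ ((3 : ℝ)/2) = 2 * Real.sqrt 2 := by
  rw [show (3 : ℝ)/2 = 1 + 1/2 by norm_num, Real.rpow_add (by norm_num), Real.rpow_one,
    ← Real.sqrt_eq_rpow]

lemma two_rpow_five_half : (2 : ℝ) ^ ((5 : ℝ)/2) = 4 * Real.sqrt 2 := by
  rw [show (5 : ℝ)/2 = 3/2 + 1 by norm_num, Real.rpow_add (by norm_num), Real.rpow_one,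
    two_rpow_three_half]
  ring

lemma gamma_three_half : Real.Gamma (3/2) = Real.sqrt Real.pi / 2 := by
  rw [show (3/2 : ℝ) = 1/2 + 1 by norm_num, Real.Gamma_add_one (by norm_num),
    Real.Gamma_one_half_eq]
  ring

lemma gamma_five_half : Real.Gamma (5/2) = 3 * Real.sqrt Real.pi / 4 := by
  rw [show (5/2 : ℝ) = 3/2 + 1 by norm_num, Real.Gamma_add_one (by norm_num),
    gamma_three_half]
  ring

lemma gmoment_two : gmoment 2 = 1 := by
  unfold gmoment
  rw [integral_gaussianReal_eq]
  have h : (fun x : ℝ => gaussianPDFReal 0 1 x * x ^ 2)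
      = fun x : ℝ =>
        (fun t : ℝ => (Real.sqrt (2 * Real.pi))⁻¹ * (t ^ 2 * Real.exp (-(1/2) * t ^ 2))) |x| := by
    funext x
    simp only [gaussianPDFReal_zero_one, sq_abs]
    ring
  rw [h]
  rw [integral_comp_abs
    (f := fun t : ℝ => (Real.sqrt (2 * Real.pi))⁻¹ * (t ^ 2 * Real.exp (-(1/2) * t ^ 2)))]
  rw [integral_const_mul, integral_Ioi_pow_exp 2]
  have e1 : (-(((2:ℕ) : ℝ) + 1) / 2) = -((3:ℝ)/2) := by norm_num
  have e2 : (((2:ℕ) : ℝ) + 1) / 2 = (3/2 : ℝ) := by norm_num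
  rw [e1, e2, half_rpow, two_rpow_three_half, gamma_three_half, sqrt_two_pi_eq]
  have hs2 : (0:ℝ) < Real.sqrt 2 := Real.sqrt_pos.mpr (by norm_num)
  have hsp : (0:ℝ) < Real.sqrt Real.pi := Real.sqrt_pos.mpr Real.pi_pos
  field_simp

lemma gmoment_four : gmoment 4 = 3 := by
  unfold gmoment
  rw [integral_gaussianReal_eq]
  have h : (fun x : ℝ => gaussianPDFReal 0 1 x * x ^ 4)
      = fun x : ℝ =>
        (fun t : ℝ => (Real.sqrt (2 * Real.pi))⁻¹ * (t ^ 4 * Real.exp (-(1/2) * t ^ 2))) |x| := by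
    funext x
    have h4 : |x| ^ 4 = x ^ 4 := by
      rw [show (4:ℕ) = 2*2 by norm_num, pow_mul, pow_mul, sq_abs]
    simp only [gaussianPDFReal_zero_one, sq_abs, h4]
    ring
  rw [h]
  rw [integral_comp_abs
    (f := fun t : ℝ => (Real.sqrt (2 * Real.pi))⁻¹ * (t ^ 4 * Real.exp (-(1/2) * t ^ 2)))]
  rw [integral_const_mul, integral_Ioi_pow_exp 4]
  have e1 : (-(((4:ℕ) : ℝ) + 1) / 2) = -((5:ℝ)/2) := by norm_num
  have e2 : (((4:ℕ) : ℝ) + 1) / 2 = (5/2 : ℝ) := by norm_num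
  rw [e1, e2, half_rpow, two_rpow_five_half, gamma_five_half, sqrt_two_pi_eq]
  have hs2 : (0:ℝ) < Real.sqrt 2 := Real.sqrt_pos.mpr (by norm_num)
  have hsp : (0:ℝ) < Real.sqrt Real.pi := Real.sqrt_pos.mpr Real.pi_pos
  field_simp

end SD
/-! ### Monomial integrals over the standard Gaussian in n variables -/

namespace SD

variable {n : ℕ}

lemma integrable_monomial (c : Fin n → ℕ) :
    Integrable (fun ξ : Fin n → ℝ => ∏ i, ξ i ^ c i) (stdGaussian n) :=
  integrable_pi_prod (f := fun i x => x ^ c i) fun i => integrable_pow_gaussianReal (c i)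

lemma integral_monomial (c : Fin n → ℕ) :
    ∫ ξ, (∏ i, ξ i ^ c i) ∂(stdGaussian n) = ∏ i, gmoment (c i) :=
  integral_pi_prod (f := fun i x => x ^ c i)

def cnt2 (a b : Fin n) (i : Fin n) : ℕ :=
  (if a = i then 1 else 0) + (if b = i then 1 else 0)

def cnt4 (a b c d : Fin n) (i : Fin n) : ℕ :=
  (if a = i then 1 else 0) + (if b = i then 1 else 0)
    + (if c = i then 1 else 0) + (if d = i then 1 else 0)

lemma monomial2 (a b : Fin n) (ξ : Fin n → ℝ) :
    (∏ i, ξ i ^ cnt2 a b i) = ξ a * ξ b := by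
  have h : ∀ i, ξ i ^ cnt2 a b i
      = (if a = i then ξ i else 1) * (if b = i then ξ i else 1) := by
    intro i
    rcases eq_or_ne a i with h1 | h1 <;> rcases eq_or_ne b i with h2 | h2 <;>
      simp [cnt2, h1, h2] <;> ring
  rw [Finset.prod_congr rfl fun i _ => h i, Finset.prod_mul_distrib]
  simp

lemma monomial4 (a b c d : Fin n) (ξ : Fin n → ℝ) :
    (∏ i, ξ i ^ cnt4 a b c d i) = ξ a * ξ b * ξ c * ξ d := by
  have h : ∀ i, ξ i ^ cnt4 a b c d i
      = (if a = i then ξ i else 1) * (if b = i then ξ i else 1)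
        * ((if c = i then ξ i else 1) * (if d = i then ξ i else 1)) := by
    intro i
    rcases eq_or_ne a i with h1 | h1 <;> rcases eq_or_ne b i with h2 | h2 <;>
      rcases eq_or_ne c i with h3 | h3 <;> rcases eq_or_ne d i with h4 | h4 <;>
        simp [cnt4, h1, h2, h3, h4] <;> ring
  rw [Finset.prod_congr rfl fun i _ => h i, Finset.prod_mul_distrib,
    Finset.prod_mul_distrib, Finset.prod_mul_distrib]
  simp
  ring

lemma integrable_pair (a b : Fin n) :
    Integrable (fun ξ : Fin n → ℝ => ξ a * ξ b) (stdGaussian n) := by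
  have h := integrable_monomial (cnt2 a b)
  simpa only [monomial2] using h

lemma integrable_quad (a b c d : Fin n) :
    Integrable (fun ξ : Fin n → ℝ => ξ a * ξ b * ξ c * ξ d) (stdGaussian n) := by
  have h := integrable_monomial (cnt4 a b c d)
  simpa only [monomial4] using h

lemma integrable_coord (a : Fin n) :
    Integrable (fun ξ : Fin n → ℝ => ξ a) (stdGaussian n) := by
  have h := integrable_monomial (fun i => if a = i then 1 else 0)
  have h2 : (fun ξ : Fin n → ℝ => ∏ i, ξ i ^ (if a = i then 1 else 0)) = fun ξ => ξ a := by
    funext ξ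
    simp [pow_ite]
  rwa [h2] at h

lemma prod_ite_one (a : Fin n) (x : ℝ) : (∏ i, if a = i then x else 1) = x := by
  simp

lemma prod_ite_two {a b : Fin n} (hab : a ≠ b) (x y : ℝ) :
    (∏ i, if a = i then x else if b = i then y else 1) = x * y := by
  have h : ∀ i, (if a = i then x else if b = i then y else 1)
      = (if a = i then x else 1) * (if b = i then y else 1) := by
    intro i
    rcases eq_or_ne a i with h1 | h1
    · rcases eq_or_ne b i with h2 | h2
      · exact absurd (h1.trans h2.symm) hab
      · simp [h1, h2]
    · simp [h1]
  simp only [h, Finset.prod_mul_distrib]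
  simp

lemma E2 (a b : Fin n) :
    ∫ ξ, ξ a * ξ b ∂(stdGaussian n) = if a = b then 1 else 0 := by
  have h : ∫ ξ, ξ a * ξ b ∂(stdGaussian n) = ∏ i, gmoment (cnt2 a b i) := by
    rw [← integral_monomial]
    exact integral_congr_ae (Filter.Eventually.of_forall fun ξ => (monomial2 a b ξ).symm)
  rw [h]
  by_cases hab : a = b
  · subst hab
    rw [if_pos rfl]
    have h2 : ∀ i, gmoment (cnt2 a a i) = if a = i then gmoment 2 else 1 := by
      intro i
      rcases eq_or_ne a i with h1 | h1 <;> simp [cnt2, h1, gmoment_zero]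
    rw [Finset.prod_congr rfl fun i _ => h2 i, prod_ite_one, gmoment_two]
  · rw [if_neg hab]
    refine Finset.prod_eq_zero (Finset.mem_univ a) ?_
    have : cnt2 a b a = 1 := by simp [cnt2, Ne.symm hab]
    rw [this, gmoment_one]

lemma E4 (a b c d : Fin n) :
    ∫ ξ, ξ a * ξ b * ξ c * ξ d ∂(stdGaussian n)
      = (if a = b then (1:ℝ) else 0) * (if c = d then 1 else 0)
        + (if a = c then 1 else 0) * (if b = d then 1 else 0)
        + (if a = d then 1 else 0) * (if b = c then 1 else 0) := by
  have h : ∫ ξ, ξ a * ξ b * ξ c * ξ d ∂(stdGaussian n) = ∏ i, gmoment (cnt4 a b c d i) := by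
    rw [← integral_monomial]
    exact integral_congr_ae (Filter.Eventually.of_forall fun ξ => (monomial4 a b c d ξ).symm)
  rw [h]
  by_cases hab : a = b
  · subst hab
    by_cases hcd : c = d
    · subst hcd
      by_cases hac : a = c
      · subst hac
        have h2 : ∀ i, gmoment (cnt4 a a a a i) = if a = i then gmoment 4 else 1 := by
          intro i
          rcases eq_or_ne a i with h1 | h1 <;> simp [cnt4, h1, gmoment_zero]
        rw [Finset.prod_congr rfl fun i _ => h2 i, prod_ite_one, gmoment_four]
        norm_num
      · have h2 : ∀ i, gmoment (cnt4 a a c c i)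
            = if a = i then gmoment 2 else if c = i then gmoment 2 else 1 := by
          intro i
          rcases eq_or_ne a i with h1 | h1
          · rcases eq_or_ne c i with h3 | h3
            · exact absurd (h1.trans h3.symm) hac
            · simp [cnt4, h1, h3]
          · rcases eq_or_ne c i with h3 | h3
            · simp [cnt4, h1, h3]
            · simp [cnt4, h1, h3, gmoment_zero]
        rw [Finset.prod_congr rfl fun i _ => h2 i, prod_ite_two hac, gmoment_two]
        norm_num [hac]
    · by_cases hac : a = c
      · have had : ¬ a = d := fun h => hcd (hac.symm.trans h)
        have hz : (∏ i, gmoment (cnt4 a a c d i)) = 0 := by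
          refine Finset.prod_eq_zero (Finset.mem_univ d) ?_
          rw [show cnt4 a a c d d = 1 by simp [cnt4, had, hcd], gmoment_one]
        rw [hz]
        norm_num [hcd, had]
      · have hdc : ¬ d = c := fun h => hcd h.symm
        have hz : (∏ i, gmoment (cnt4 a a c d i)) = 0 := by
          refine Finset.prod_eq_zero (Finset.mem_univ c) ?_
          rw [show cnt4 a a c d c = 1 by simp [cnt4, hac, hdc], gmoment_one]
        rw [hz]
        norm_num [hcd, hac]
  · by_cases hac : a = c
    · subst hac
      by_cases hbd : b = d
      · subst hbd
        have h2 : ∀ i, gmoment (cnt4 a b a b i)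
            = if a = i then gmoment 2 else if b = i then gmoment 2 else 1 := by
          intro i
          rcases eq_or_ne a i with h1 | h1
          · rcases eq_or_ne b i with h3 | h3
            · exact absurd (h1.trans h3.symm) hab
            · simp [cnt4, h1, h3]
          · rcases eq_or_ne b i with h3 | h3
            · simp [cnt4, h1, h3]
            · simp [cnt4, h1, h3, gmoment_zero]
        rw [Finset.prod_congr rfl fun i _ => h2 i, prod_ite_two hab, gmoment_two]
        have hba : ¬ b = a := fun h => hab h.symm
        norm_num [hab, hba]
      · have hdb : ¬ d = b := fun h => hbd h.symm
        have hz : (∏ i, gmoment (cnt4 a b a d i)) = 0 := by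
          refine Finset.prod_eq_zero (Finset.mem_univ b) ?_
          rw [show cnt4 a b a d b = 1 by simp [cnt4, hab, hdb], gmoment_one]
        rw [hz]
        have hba : ¬ b = a := fun h => hab h.symm
        norm_num [hab, hbd, hba]
    · by_cases had : a = d
      · by_cases hbc : b = c
        · subst had
          subst hbc
          have h2 : ∀ i, gmoment (cnt4 a b b a i)
              = if a = i then gmoment 2 else if b = i then gmoment 2 else 1 := by
            intro i
            rcases eq_or_ne a i with h1 | h1
            · rcases eq_or_ne b i with h3 | h3
              · exact absurd (h1.trans h3.symm) hab
              · simp [cnt4, h1, h3]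
            · rcases eq_or_ne b i with h3 | h3
              · simp [cnt4, h1, h3]
              · simp [cnt4, h1, h3, gmoment_zero]
          rw [Finset.prod_congr rfl fun i _ => h2 i, prod_ite_two hab, gmoment_two]
          norm_num [hab, hac]
        · have hcb : ¬ c = b := fun h => hbc h.symm
          have hdb : ¬ d = b := fun h => hab (had.trans h)
          have hz : (∏ i, gmoment (cnt4 a b c d i)) = 0 := by
            refine Finset.prod_eq_zero (Finset.mem_univ b) ?_
            rw [show cnt4 a b c d b = 1 by simp [cnt4, hab, hcb, hdb], gmoment_one]
          rw [hz]
          norm_num [hab, hac, hbc]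
      · have hba : ¬ b = a := fun h => hab h.symm
        have hca : ¬ c = a := fun h => hac h.symm
        have hda : ¬ d = a := fun h => had h.symm
        have hz : (∏ i, gmoment (cnt4 a b c d i)) = 0 := by
          refine Finset.prod_eq_zero (Finset.mem_univ a) ?_
          rw [show cnt4 a b c d a = 1 by simp [cnt4, hba, hca, hda], gmoment_one]
        rw [hz]
        norm_num [hab, hac, had]

end SD
/-! ### Integrals of products of linear forms -/

namespace SD

variable {n : ℕ}

lemma integrable_lin (v : Fin n → ℝ) :
    Integrable (fun ξ : Fin n → ℝ => ∑ j, v j * ξ j) (stdGaussian n) :=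
  integrable_finset_sum _ fun j _ => (integrable_coord j).const_mul (v j)

lemma pair_expand (v w : Fin n → ℝ) (ξ : Fin n → ℝ) :
    (∑ j, v j * ξ j) * (∑ k, w k * ξ k)
      = ∑ j, ∑ k, v j * w k * (ξ j * ξ k) := by
  rw [Finset.sum_mul_sum]
  exact Finset.sum_congr rfl fun j _ => Finset.sum_congr rfl fun k _ => by ring

lemma integrable_pair_lin (v w : Fin n → ℝ) :
    Integrable (fun ξ : Fin n → ℝ => (∑ j, v j * ξ j) * (∑ k, w k * ξ k)) (stdGaussian n) := by
  have h : (fun ξ : Fin n → ℝ => (∑ j, v j * ξ j) * (∑ k, w k * ξ k))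
      = fun ξ => ∑ j, ∑ k, v j * w k * (ξ j * ξ k) := funext fun ξ => pair_expand v w ξ
  rw [h]
  exact integrable_finset_sum _ fun j _ =>
    integrable_finset_sum _ fun k _ => (integrable_pair j k).const_mul _

lemma double_delta (a b : Fin n → ℝ) :
    (∑ j, ∑ k, a j * b k * (if j = k then (1:ℝ) else 0)) = ∑ j, a j * b j := by
  have h : ∀ j k, a j * b k * (if j = k then (1:ℝ) else 0)
      = if j = k then a j * b k else 0 := by
    intro j k
    by_cases h : j = k <;> simp [h]
  simp_rw [h]
  simp [Finset.sum_ite_eq]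

lemma integral_pair_lin (v w : Fin n → ℝ) :
    ∫ ξ, (∑ j, v j * ξ j) * (∑ k, w k * ξ k) ∂(stdGaussian n) = ∑ j, v j * w j := by
  calc
    ∫ ξ, (∑ j, v j * ξ j) * (∑ k, w k * ξ k) ∂(stdGaussian n)
        = ∫ ξ, (∑ j, ∑ k, v j * w k * (ξ j * ξ k)) ∂(stdGaussian n) :=
      integral_congr_ae (Filter.Eventually.of_forall fun ξ => pair_expand v w ξ)
    _ = ∑ j, ∫ ξ, (∑ k, v j * w k * (ξ j * ξ k)) ∂(stdGaussian n) :=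
      integral_finset_sum _ fun j _ =>
        integrable_finset_sum _ fun k _ => (integrable_pair j k).const_mul _
    _ = ∑ j, ∑ k, ∫ ξ, v j * w k * (ξ j * ξ k) ∂(stdGaussian n) :=
      Finset.sum_congr rfl fun j _ =>
        integral_finset_sum _ fun k _ => (integrable_pair j k).const_mul _
    _ = ∑ j, ∑ k, v j * w k * (if j = k then 1 else 0) := by
      simp_rw [integral_const_mul, E2]
    _ = ∑ j, v j * w j := double_delta v w

lemma sum4_factor (F G : Fin n → Fin n → ℝ) :
    (∑ j, ∑ k, ∑ l, ∑ p, F j k * G l p) = (∑ j, ∑ k, F j k) * (∑ l, ∑ p, G l p) := by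
  simp_rw [← Finset.mul_sum]
  simp_rw [← Finset.sum_mul]

lemma quad_expand (v w y z : Fin n → ℝ) (ξ : Fin n → ℝ) :
    ((∑ j, v j * ξ j) * (∑ k, w k * ξ k)) * ((∑ l, y l * ξ l) * (∑ p, z p * ξ p))
      = ∑ j, ∑ k, ∑ l, ∑ p, v j * w k * y l * z p * (ξ j * ξ k * ξ l * ξ p) := by
  rw [pair_expand v w ξ, pair_expand y z ξ,
    ← sum4_factor (fun j k => v j * w k * (ξ j * ξ k)) (fun l p => y l * z p * (ξ l * ξ p))]
  exact Finset.sum_congr rfl fun j _ => Finset.sum_congr rfl fun k _ =>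
    Finset.sum_congr rfl fun l _ => Finset.sum_congr rfl fun p _ => by ring

lemma integrable_quad_lin (v w y z : Fin n → ℝ) :
    Integrable (fun ξ : Fin n → ℝ =>
      ((∑ j, v j * ξ j) * (∑ k, w k * ξ k)) * ((∑ l, y l * ξ l) * (∑ p, z p * ξ p)))
      (stdGaussian n) := by
  have h : (fun ξ : Fin n → ℝ =>
        ((∑ j, v j * ξ j) * (∑ k, w k * ξ k)) * ((∑ l, y l * ξ l) * (∑ p, z p * ξ p)))
      = fun ξ => ∑ j, ∑ k, ∑ l, ∑ p, v j * w k * y l * z p * (ξ j * ξ k * ξ l * ξ p) :=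
    funext fun ξ => quad_expand v w y z ξ
  rw [h]
  exact integrable_finset_sum _ fun j _ => integrable_finset_sum _ fun k _ =>
    integrable_finset_sum _ fun l _ => integrable_finset_sum _ fun p _ =>
      (integrable_quad j k l p).const_mul _

lemma integral_quad_lin (v w y z : Fin n → ℝ) :
    ∫ ξ, ((∑ j, v j * ξ j) * (∑ k, w k * ξ k)) * ((∑ l, y l * ξ l) * (∑ p, z p * ξ p))
        ∂(stdGaussian n)
      = (∑ j, v j * w j) * (∑ j, y j * z j) + (∑ j, v j * y j) * (∑ j, w j * z j)
        + (∑ j, v j * z j) * (∑ j, w j * y j) := by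
  have hI : ∫ ξ, ((∑ j, v j * ξ j) * (∑ k, w k * ξ k)) * ((∑ l, y l * ξ l) * (∑ p, z p * ξ p))
        ∂(stdGaussian n)
      = ∑ j, ∑ k, ∑ l, ∑ p, v j * w k * y l * z p *
          ((if j = k then (1:ℝ) else 0) * (if l = p then 1 else 0)
            + (if j = l then 1 else 0) * (if k = p then 1 else 0)
            + (if j = p then 1 else 0) * (if k = l then 1 else 0)) := by
    calc
      ∫ ξ, ((∑ j, v j * ξ j) * (∑ k, w k * ξ k)) * ((∑ l, y l * ξ l) * (∑ p, z p * ξ p))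
          ∂(stdGaussian n)
          = ∫ ξ, (∑ j, ∑ k, ∑ l, ∑ p, v j * w k * y l * z p * (ξ j * ξ k * ξ l * ξ p))
            ∂(stdGaussian n) :=
        integral_congr_ae (Filter.Eventually.of_forall fun ξ => quad_expand v w y z ξ)
      _ = ∑ j, ∫ ξ, (∑ k, ∑ l, ∑ p, v j * w k * y l * z p * (ξ j * ξ k * ξ l * ξ p))
            ∂(stdGaussian n) :=
        integral_finset_sum _ fun j _ => integrable_finset_sum _ fun k _ =>
          integrable_finset_sum _ fun l _ => integrable_finset_sum _ fun p _ =>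
            (integrable_quad j k l p).const_mul _
      _ = ∑ j, ∑ k, ∫ ξ, (∑ l, ∑ p, v j * w k * y l * z p * (ξ j * ξ k * ξ l * ξ p))
            ∂(stdGaussian n) :=
        Finset.sum_congr rfl fun j _ => integral_finset_sum _ fun k _ =>
          integrable_finset_sum _ fun l _ => integrable_finset_sum _ fun p _ =>
            (integrable_quad j k l p).const_mul _
      _ = ∑ j, ∑ k, ∑ l, ∫ ξ, (∑ p, v j * w k * y l * z p * (ξ j * ξ k * ξ l * ξ p))
            ∂(stdGaussian n) :=
        Finset.sum_congr rfl fun j _ => Finset.sum_congr rfl fun k _ =>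
          integral_finset_sum _ fun l _ => integrable_finset_sum _ fun p _ =>
            (integrable_quad j k l p).const_mul _
      _ = ∑ j, ∑ k, ∑ l, ∑ p, ∫ ξ, v j * w k * y l * z p * (ξ j * ξ k * ξ l * ξ p)
            ∂(stdGaussian n) :=
        Finset.sum_congr rfl fun j _ => Finset.sum_congr rfl fun k _ =>
          Finset.sum_congr rfl fun l _ => integral_finset_sum _ fun p _ =>
            (integrable_quad j k l p).const_mul _
      _ = _ := by
        simp_rw [integral_const_mul, E4]
  rw [hI]
  have hsplit : (∑ j, ∑ k, ∑ l, ∑ p, v j * w k * y l * z p *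
        ((if j = k then (1:ℝ) else 0) * (if l = p then 1 else 0)
          + (if j = l then 1 else 0) * (if k = p then 1 else 0)
          + (if j = p then 1 else 0) * (if k = l then 1 else 0)))
      = (∑ j, ∑ k, ∑ l, ∑ p, (v j * w k * (if j = k then (1:ℝ) else 0))
            * (y l * z p * (if l = p then 1 else 0)))
        + (∑ j, ∑ k, ∑ l, ∑ p, v j * w k * y l * z p *
            ((if j = l then (1:ℝ) else 0) * (if k = p then 1 else 0)))
        + (∑ j, ∑ k, ∑ l, ∑ p, v j * w k * y l * z p *
            ((if j = p then (1:ℝ) else 0) * (if k = l then 1 else 0))) := by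
    simp_rw [mul_add, Finset.sum_add_distrib]
    congr 1
    congr 1
    refine Finset.sum_congr rfl fun j _ => Finset.sum_congr rfl fun k _ =>
      Finset.sum_congr rfl fun l _ => Finset.sum_congr rfl fun p _ => by ring
  rw [hsplit]
  congr 1
  · congr 1
    · -- term 1
      rw [sum4_factor, double_delta, double_delta]
    · -- term 2 : swap k and l
      have hswap : ∀ j : Fin n, (∑ k, ∑ l, ∑ p, v j * w k * y l * z p *
            ((if j = l then (1:ℝ) else 0) * (if k = p then 1 else 0)))
          = ∑ l, ∑ k, ∑ p, v j * w k * y l * z p *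
            ((if j = l then (1:ℝ) else 0) * (if k = p then 1 else 0)) := fun j =>
        Finset.sum_comm
      simp_rw [hswap]
      have hfac : ∀ (j k l p : Fin n), v j * w k * y l * z p *
            ((if j = l then (1:ℝ) else 0) * (if k = p then 1 else 0))
          = (v j * y l * (if j = l then (1:ℝ) else 0)) * (w k * z p * (if k = p then 1 else 0)) := by
        intro j k l p; ring
      simp_rw [hfac]
      rw [sum4_factor (fun j l => v j * y l * (if j = l then (1:ℝ) else 0))
        (fun k p => w k * z p * (if k = p then 1 else 0)), double_delta, double_delta]
  · -- term 3 : reorder to j, p, k, l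
    have hswap1 : ∀ (j k : Fin n), (∑ l, ∑ p, v j * w k * y l * z p *
          ((if j = p then (1:ℝ) else 0) * (if k = l then 1 else 0)))
        = ∑ p, ∑ l, v j * w k * y l * z p *
          ((if j = p then (1:ℝ) else 0) * (if k = l then 1 else 0)) := fun j k =>
      Finset.sum_comm
    simp_rw [hswap1]
    have hswap2 : ∀ j : Fin n, (∑ k, ∑ p, ∑ l, v j * w k * y l * z p *
          ((if j = p then (1:ℝ) else 0) * (if k = l then 1 else 0)))
        = ∑ p, ∑ k, ∑ l, v j * w k * y l * z p *
          ((if j = p then (1:ℝ) else 0) * (if k = l then 1 else 0)) := fun j =>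
      Finset.sum_comm
    simp_rw [hswap2]
    have hfac : ∀ (j k l p : Fin n), v j * w k * y l * z p *
          ((if j = p then (1:ℝ) else 0) * (if k = l then 1 else 0))
        = (v j * z p * (if j = p then (1:ℝ) else 0)) * (w k * y l * (if k = l then 1 else 0)) := by
      intro j k l p; ring
    simp_rw [hfac]
    rw [sum4_factor (fun j p => v j * z p * (if j = p then (1:ℝ) else 0))
      (fun k l => w k * y l * (if k = l then 1 else 0)), double_delta, double_delta]

end SD
/-! ### supNorm basics -/

namespace SD

lemma supNorm_nonneg {m : ℕ} (v : Fin m → ℝ) : 0 ≤ supNorm v :=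
  Real.iSup_nonneg fun _ => abs_nonneg _

lemma supNorm_le_sum {m : ℕ} (v : Fin m → ℝ) : supNorm v ≤ ∑ i, |v i| := by
  rcases isEmpty_or_nonempty (Fin m) with h | h
  · unfold supNorm
    rw [iSup, Set.range_eq_empty, Real.sSup_empty]
    exact Finset.sum_nonneg fun i _ => abs_nonneg _
  · exact ciSup_le fun i => Finset.single_le_sum (fun i _ => abs_nonneg (v i)) (Finset.mem_univ i)

lemma supNorm_smul {m : ℕ} {c : ℝ} (hc : 0 ≤ c) (v : Fin m → ℝ) :
    supNorm (fun i => c * v i) = c * supNorm v := by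
  unfold supNorm
  rw [Real.mul_iSup_of_nonneg hc]
  congr 1
  funext i
  rw [abs_mul, abs_of_nonneg hc]

lemma supNorm_zero {m : ℕ} : supNorm (fun _ : Fin m => (0:ℝ)) = 0 := by
  rcases isEmpty_or_nonempty (Fin m) with h | h
  · unfold supNorm
    rw [iSup, Set.range_eq_empty, Real.sSup_empty]
  · simp [supNorm]

end SD

open SD

set_option maxHeartbeats 1000000 in
theorem stmt_2 :
    ∃ C : ℝ, 0 < C ∧
      ∀ (m n : ℕ) (A : Matrix (Fin m) (Fin n) ℝ) (U : Matrix (Fin n) (Fin n) ℝ),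
        (∑ i, ∑ j, U i j ^ 2) = (n : ℝ) →
        discS A ≤ C * ∫ ξ, supNorm (A.mulVec (U.mulVec ξ)) ∂(stdGaussian n) := by
  refine ⟨4, by norm_num, ?_⟩
  intro m n A U hU
  have hYnn : ∀ ξ : Fin n → ℝ, 0 ≤ supNorm (A.mulVec (U.mulVec ξ)) :=
    fun ξ => supNorm_nonneg _
  have hEY0 : 0 ≤ ∫ ξ, supNorm (A.mulVec (U.mulVec ξ)) ∂(stdGaussian n) :=
    integral_nonneg hYnn
  have hbdd : BddBelow {d | ∃ x : Fin n → ℝ, e2 x = Real.sqrt n ∧ d = supNorm (A.mulVec x)} := by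
    refine ⟨0, fun d hd => ?_⟩
    obtain ⟨x', -, rfl⟩ := hd
    exact supNorm_nonneg _
  rcases Nat.eq_zero_or_pos n with hn | hn
  · -- n = 0
    subst hn
    have hd : discS A ≤ 0 := by
      unfold discS
      refine csInf_le hbdd ⟨fun _ => 0, by simp [e2], ?_⟩
      have h0 : A.mulVec (fun _ => (0:ℝ)) = fun _ => (0:ℝ) := by
        funext i
        simp [Matrix.mulVec, dotProduct]
      rw [h0, supNorm_zero]
    linarith
  -- n ≥ 1
  have hn0 : (0:ℝ) < n := by exact_mod_cast hn
  have hn1 : (1:ℝ) ≤ n := by exact_mod_cast hn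
  have hrwA : ∀ (ξ : Fin n → ℝ) (i : Fin m),
      A.mulVec (U.mulVec ξ) i = ∑ j, (A * U) i j * ξ j := by
    intro ξ i
    rw [Matrix.mulVec_mulVec]
    simp [Matrix.mulVec, dotProduct]
  have hrwU : ∀ (ξ : Fin n → ℝ) (i : Fin n), U.mulVec ξ i = ∑ j, U i j * ξ j := by
    intro ξ i
    simp [Matrix.mulVec, dotProduct]
  have hlinmeas : ∀ v : Fin n → ℝ, Measurable fun ξ : Fin n → ℝ => ∑ j, v j * ξ j :=
    fun v => Finset.measurable_sum _ fun j _ => by fun_prop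
  -- Y
  set Y : (Fin n → ℝ) → ℝ := fun ξ => supNorm (A.mulVec (U.mulVec ξ)) with hYdef
  have hYmeas : Measurable Y := by
    apply Measurable.iSup
    intro i
    have h : (fun ξ : Fin n → ℝ => |A.mulVec (U.mulVec ξ) i|)
        = fun ξ => |∑ j, (A * U) i j * ξ j| := by
      funext ξ; rw [hrwA]
    exact h ▸ (hlinmeas fun j => (A * U) i j).abs
  have hYint : Integrable Y (stdGaussian n) := by
    refine Integrable.mono' (g := fun ξ => ∑ i, |∑ j, (A * U) i j * ξ j|)
      (integrable_finset_sum _ fun i _ => (integrable_lin fun j => (A * U) i j).abs)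
      hYmeas.aestronglyMeasurable ?_
    refine Filter.Eventually.of_forall fun ξ => ?_
    rw [Real.norm_eq_abs, abs_of_nonneg (hYnn ξ)]
    have h := supNorm_le_sum (A.mulVec (U.mulVec ξ))
    simp_rw [hrwA ξ] at h
    exact h
  -- NS and N
  set NS : (Fin n → ℝ) → ℝ := fun ξ => ∑ i, (∑ j, U i j * ξ j) * (∑ j, U i j * ξ j) with hNSdef
  set N : (Fin n → ℝ) → ℝ := fun ξ => Real.sqrt (NS ξ) with hNdef
  have hNSnonneg : ∀ ξ, 0 ≤ NS ξ := fun ξ => Finset.sum_nonneg fun i _ => mul_self_nonneg _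
  have hNnonneg : ∀ ξ, 0 ≤ N ξ := fun ξ => Real.sqrt_nonneg _
  have hNsq : ∀ ξ, N ξ ^ 2 = NS ξ := fun ξ => Real.sq_sqrt (hNSnonneg ξ)
  have hNSmeas : Measurable NS :=
    Finset.measurable_sum _ fun i _ => (hlinmeas (U i)).mul (hlinmeas (U i))
  have hNmeas : Measurable N := hNSmeas.sqrt
  have hNSint : Integrable NS (stdGaussian n) :=
    integrable_finset_sum _ fun i _ => integrable_pair_lin (U i) (U i)
  have hNSexp : ∀ ξ, NS ξ * NS ξ = ∑ i, ∑ i',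
      ((∑ j, U i j * ξ j) * (∑ j, U i j * ξ j))
        * ((∑ j, U i' j * ξ j) * (∑ j, U i' j * ξ j)) := by
    intro ξ
    simp only [hNSdef]
    rw [Finset.sum_mul_sum]
  have hNS2int : Integrable (fun ξ => NS ξ * NS ξ) (stdGaussian n) := by
    have h : (fun ξ => NS ξ * NS ξ) = fun ξ => ∑ i, ∑ i',
        ((∑ j, U i j * ξ j) * (∑ j, U i j * ξ j))
          * ((∑ j, U i' j * ξ j) * (∑ j, U i' j * ξ j)) := funext hNSexp
    rw [h]
    exact integrable_finset_sum _ fun i _ => integrable_finset_sum _ fun i' _ =>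
      integrable_quad_lin (U i) (U i) (U i') (U i')
  have hNint : Integrable N (stdGaussian n) := by
    refine Integrable.mono' (g := fun ξ => 1 + NS ξ)
      ((integrable_const 1).add hNSint) hNmeas.aestronglyMeasurable ?_
    refine Filter.Eventually.of_forall fun ξ => ?_
    rw [Real.norm_eq_abs, abs_of_nonneg (hNnonneg ξ)]
    show N ξ ≤ 1 + NS ξ
    nlinarith [hNsq ξ, hNnonneg ξ, hNSnonneg ξ, sq_nonneg (N ξ - 1)]
  have hNNSint : Integrable (fun ξ => N ξ * NS ξ) (stdGaussian n) := by
    refine Integrable.mono' (g := fun ξ => NS ξ + NS ξ * NS ξ)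
      (hNSint.add hNS2int) (hNmeas.mul hNSmeas).aestronglyMeasurable ?_
    refine Filter.Eventually.of_forall fun ξ => ?_
    rw [Real.norm_eq_abs, abs_of_nonneg (mul_nonneg (hNnonneg ξ) (hNSnonneg ξ))]
    show N ξ * NS ξ ≤ NS ξ + NS ξ * NS ξ
    nlinarith [hNsq ξ, hNnonneg ξ, hNSnonneg ξ,
      mul_nonneg (hNSnonneg ξ) (sq_nonneg (N ξ - 1)), mul_nonneg (hNnonneg ξ) (hNSnonneg ξ)]
  -- first and second moments of NS
  have hs_eq : ∑ i, ∑ j, U i j * U i j = (n : ℝ) := by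
    rw [← hU]
    exact Finset.sum_congr rfl fun i _ => Finset.sum_congr rfl fun j _ => (sq (U i j)) ▸ by ring
  have hNS1 : ∫ ξ, NS ξ ∂(stdGaussian n) = (n : ℝ) := by
    simp only [hNSdef]
    rw [integral_finset_sum _ fun i _ => integrable_pair_lin (U i) (U i)]
    calc (∑ i, ∫ ξ, (∑ j, U i j * ξ j) * (∑ j, U i j * ξ j) ∂(stdGaussian n))
        = ∑ i, ∑ j, U i j * U i j :=
          Finset.sum_congr rfl fun i _ => integral_pair_lin (U i) (U i)
      _ = (n : ℝ) := hs_eq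
  have hNS2 : ∫ ξ, NS ξ * NS ξ ∂(stdGaussian n) ≤ 3 * (n:ℝ) ^ 2 := by
    have h : (fun ξ => NS ξ * NS ξ) = fun ξ => ∑ i, ∑ i',
        ((∑ j, U i j * ξ j) * (∑ j, U i j * ξ j))
          * ((∑ j, U i' j * ξ j) * (∑ j, U i' j * ξ j)) := funext hNSexp
    rw [h]
    rw [integral_finset_sum _ fun i _ => integrable_finset_sum _ fun i' _ =>
      integrable_quad_lin (U i) (U i) (U i') (U i')]
    have hstep : ∀ i, (∫ ξ, (∑ i'_1, ((∑ j, U i j * ξ j) * (∑ j, U i j * ξ j))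
          * ((∑ j, U i'_1 j * ξ j) * (∑ j, U i'_1 j * ξ j))) ∂(stdGaussian n))
        = ∑ i', ((∑ j, U i j * U i j) * (∑ j, U i' j * U i' j)
            + (∑ j, U i j * U i' j) * (∑ j, U i j * U i' j)
            + (∑ j, U i j * U i' j) * (∑ j, U i j * U i' j)) := by
      intro i
      rw [integral_finset_sum _ fun i' _ => integrable_quad_lin (U i) (U i) (U i') (U i')]
      exact Finset.sum_congr rfl fun i' _ => integral_quad_lin (U i) (U i) (U i') (U i')
    rw [Finset.sum_congr rfl fun i _ => hstep i]
    have hb : ∀ i i' : Fin n, (∑ j, U i j * U i j) * (∑ j, U i' j * U i' j)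
          + (∑ j, U i j * U i' j) * (∑ j, U i j * U i' j)
          + (∑ j, U i j * U i' j) * (∑ j, U i j * U i' j)
        ≤ 3 * ((∑ j, U i j * U i j) * (∑ j, U i' j * U i' j)) := by
      intro i i'
      have hcs := Finset.sum_mul_sq_le_sq_mul_sq Finset.univ (U i) (U i')
      simp only [← sq] at hcs ⊢
      nlinarith [hcs]
    calc (∑ i, ∑ i', ((∑ j, U i j * U i j) * (∑ j, U i' j * U i' j)
            + (∑ j, U i j * U i' j) * (∑ j, U i j * U i' j)
            + (∑ j, U i j * U i' j) * (∑ j, U i j * U i' j)))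
        ≤ ∑ i, ∑ i', 3 * ((∑ j, U i j * U i j) * (∑ j, U i' j * U i' j)) :=
          Finset.sum_le_sum fun i _ => Finset.sum_le_sum fun i' _ => hb i i'
      _ = 3 * ((∑ i, ∑ j, U i j * U i j) * (∑ i, ∑ j, U i j * U i j)) := by
          rw [Finset.sum_mul_sum (f := fun i => ∑ j, U i j * U i j)
            (g := fun i => ∑ j, U i j * U i j)]
          rw [Finset.mul_sum]
          exact Finset.sum_congr rfl fun i _ => by rw [Finset.mul_sum]
      _ = 3 * (n:ℝ) ^ 2 := by rw [hs_eq]; ring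
  -- lower bound on E N
  set e : ℝ := Real.sqrt (3 * n) with hedef
  have he0 : 0 < e := Real.sqrt_pos.mpr (by positivity)
  have he2 : e ^ 2 = 3 * n := Real.sq_sqrt (by positivity)
  set EN : ℝ := ∫ ξ, N ξ ∂(stdGaussian n) with hENdef
  set ENNS : ℝ := ∫ ξ, N ξ * NS ξ ∂(stdGaussian n) with hENNSdef
  have h1 : 2 * e * (n:ℝ) ≤ e ^ 2 * EN + ENNS := by
    have hpt : ∀ ξ, 2 * e * NS ξ ≤ e ^ 2 * N ξ + N ξ * NS ξ := by
      intro ξ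
      nlinarith [mul_nonneg (hNnonneg ξ) (sq_nonneg (N ξ - e)), hNsq ξ]
    have hint := integral_mono ((hNSint.const_mul (2 * e)))
      (((hNint.const_mul (e ^ 2))).add hNNSint) hpt
    simp only [Pi.add_apply] at hint
    rw [integral_const_mul, hNS1, integral_add (hNint.const_mul (e ^ 2)) hNNSint,
      integral_const_mul] at hint
    exact hint
  have h2 : 2 * e * ENNS ≤ e ^ 2 * (n:ℝ) + 3 * (n:ℝ) ^ 2 := by
    have hpt : ∀ ξ, 2 * e * (N ξ * NS ξ) ≤ e ^ 2 * NS ξ + NS ξ * NS ξ := by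
      intro ξ
      nlinarith [mul_nonneg (hNSnonneg ξ) (sq_nonneg (N ξ - e)), hNsq ξ]
    have hint := integral_mono (hNNSint.const_mul (2 * e))
      ((hNSint.const_mul (e ^ 2)).add hNS2int) hpt
    simp only [Pi.add_apply] at hint
    rw [integral_const_mul, integral_add (hNSint.const_mul (e ^ 2)) hNS2int,
      integral_const_mul, hNS1] at hint
    exact hint.trans (by linarith [hNS2])
  have hEN : (n:ℝ) ≤ e * EN := by
    have h3 : 2 * e * (2 * e * (n:ℝ)) ≤ 2 * e * (e ^ 2 * EN + ENNS) :=
      mul_le_mul_of_nonneg_left h1 (by positivity)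
    have h4 : 2 * e * (e ^ 2 * EN + ENNS) = 2 * (e^2) * (e * EN) + 2 * e * ENNS := by ring
    have h5 : 2 * e * (2 * e * (n:ℝ)) = 4 * (e^2) * (n:ℝ) := by ring
    rw [h4, h5, he2] at h3
    have h6 : 6 * (n:ℝ) * (n:ℝ) ≤ 6 * (n:ℝ) * (e * EN) := by nlinarith [h3, h2, he2]
    exact le_of_mul_le_mul_left h6 (by positivity)
  -- existence of a good point
  set EY : ℝ := ∫ ξ, Y ξ ∂(stdGaussian n) with hEYdef
  have hEYnn : 0 ≤ EY := hEY0
  have hex : ∃ ξ0, 0 < N ξ0 ∧ Real.sqrt n * Y ξ0 ≤ 2 * Real.sqrt 3 * EY * N ξ0 := by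
    by_contra hcon
    push_neg at hcon
    rcases hEYnn.eq_or_lt with hEY | hEY
    · -- EY = 0
      have hae : Y =ᵐ[stdGaussian n] 0 :=
        (integral_eq_zero_iff_of_nonneg hYnn hYint).mp hEY.symm
      have hN0ae : N =ᵐ[stdGaussian n] 0 := by
        filter_upwards [hae] with ξ hξ
        simp only [Pi.zero_apply] at hξ ⊢
        rcases (hNnonneg ξ).eq_or_lt with h | h
        · exact h.symm
        · exfalso
          have h2 := hcon ξ h
          rw [hξ, mul_zero, ← hEY] at h2
          simp at h2
      have : EN = 0 := by
        rw [hENdef]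
        rw [integral_congr_ae hN0ae]
        simp
      rw [this, mul_zero] at hEN
      linarith
    · -- EY > 0
      have hpt : ∀ ξ, 2 * Real.sqrt 3 * EY * N ξ ≤ Real.sqrt n * Y ξ := by
        intro ξ
        rcases (hNnonneg ξ).eq_or_lt with h | h
        · rw [← h, mul_zero]
          exact mul_nonneg (Real.sqrt_nonneg _) (hYnn ξ)
        · exact (hcon ξ h).le
      have hint := integral_mono (hNint.const_mul (2 * Real.sqrt 3 * EY))
        (hYint.const_mul (Real.sqrt n)) hpt
      rw [integral_const_mul, integral_const_mul] at hint
      -- hint : 2 * √3 * EY * EN ≤ √n * EY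
      have hs3 : (0:ℝ) < Real.sqrt 3 := Real.sqrt_pos.mpr (by norm_num)
      have hsn : (0:ℝ) < Real.sqrt n := Real.sqrt_pos.mpr hn0
      have hes : e = Real.sqrt 3 * Real.sqrt n := by
        rw [hedef, Real.sqrt_mul (by norm_num : (0:ℝ) ≤ 3)]
      have hEN2 : Real.sqrt (n:ℝ) * Real.sqrt (n:ℝ) ≤ Real.sqrt 3 * Real.sqrt (n:ℝ) * EN := by
        rw [Real.mul_self_sqrt hn0.le, ← hes]
        exact hEN
      have hEN' : Real.sqrt (n:ℝ) ≤ Real.sqrt 3 * EN := by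
        have h9 : Real.sqrt (n:ℝ) * Real.sqrt (n:ℝ)
            ≤ Real.sqrt (n:ℝ) * (Real.sqrt 3 * EN) := by
          calc Real.sqrt (n:ℝ) * Real.sqrt (n:ℝ)
              ≤ Real.sqrt 3 * Real.sqrt (n:ℝ) * EN := hEN2
            _ = Real.sqrt (n:ℝ) * (Real.sqrt 3 * EN) := by ring
        exact le_of_mul_le_mul_left h9 hsn
      have hm : 2 * EY * Real.sqrt (n:ℝ) ≤ 2 * EY * (Real.sqrt 3 * EN) :=
        mul_le_mul_of_nonneg_left hEN' (by positivity)
      have hp : (0:ℝ) < EY * Real.sqrt (n:ℝ) := mul_pos hEY hsn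
      nlinarith [hm, hint, hp]
  obtain ⟨ξ0, hN0, hle⟩ := hex
  set c : ℝ := Real.sqrt n / N ξ0 with hcdef
  have hc0 : 0 ≤ c := div_nonneg (Real.sqrt_nonneg _) hN0.le
  set x : Fin n → ℝ := fun j => c * U.mulVec ξ0 j with hxdef
  have hsumsq : Real.sqrt (∑ j, (U.mulVec ξ0 j) ^ 2) = N ξ0 := by
    simp only [hNdef, hNSdef]
    congr 1
    refine Finset.sum_congr rfl fun j _ => ?_
    rw [hrwU]
    ring
  have hxe2 : e2 x = Real.sqrt n := by
    unfold e2
    have h : ∑ j, x j ^ 2 = c ^ 2 * ∑ j, (U.mulVec ξ0 j) ^ 2 := by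
      rw [Finset.mul_sum]
      exact Finset.sum_congr rfl fun j _ => by simp only [hxdef]; ring
    rw [h, Real.sqrt_mul (sq_nonneg c), Real.sqrt_sq hc0, hsumsq, hcdef,
      div_mul_cancel₀ _ (ne_of_gt hN0)]
  have hmem : supNorm (A.mulVec x)
      ∈ {d | ∃ x : Fin n → ℝ, e2 x = Real.sqrt n ∧ d = supNorm (A.mulVec x)} :=
    ⟨x, hxe2, rfl⟩
  have hval : supNorm (A.mulVec x) ≤ 2 * Real.sqrt 3 * EY := by
    have hAx : A.mulVec x = fun i => c * A.mulVec (U.mulVec ξ0) i := by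
      have hx' : x = c • U.mulVec ξ0 := by
        funext j
        simp only [hxdef, Pi.smul_apply, smul_eq_mul]
      rw [hx', Matrix.mulVec_smul]
      funext i
      simp
    rw [hAx, supNorm_smul hc0]
    have hYc : supNorm (A.mulVec (U.mulVec ξ0)) = Y ξ0 := by simp only [hYdef]
    rw [hYc]
    have hform : c * Y ξ0 = Real.sqrt n * Y ξ0 / N ξ0 := by
      simp only [hcdef]
      ring
    rw [hform]
    exact (div_le_iff₀ hN0).mpr hle
  have hd : discS A ≤ supNorm (A.mulVec x) := by
    unfold discS
    exact csInf_le hbdd hmem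
  have h43 : 2 * Real.sqrt 3 ≤ 4 := by
    nlinarith [Real.sq_sqrt (by norm_num : (0:ℝ) ≤ 3), Real.sqrt_nonneg 3]
  calc discS A ≤ 2 * Real.sqrt 3 * EY := hd.trans hval
    _ ≤ 4 * EY := mul_le_mul_of_nonneg_right h43 hEYnn
end

section
/- There exists a universal constant C > 0 such that for every m ≥ 2, every n ≥ 1, and every matrix A ∈ ℝ^{m×n}, the spherical discrepancy satisfies disc_s(A) ≤ C · √(min(n, log m)) · disc_v(A). -/
open MeasureTheory

/-- Vector discrepancy. -/
noncomputable def discV {m n : ℕ} (A : Matrix (Fin m) (Fin n) ℝ) : ℝ :=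
  sInf { d | ∃ u : Fin n → (Fin n → ℝ), (∀ j, e2 (u j) = 1) ∧
    d = ⨆ i, e2 (fun k => ∑ j, A i j * u j k) }

namespace D7
open Finset

section Base
variable {n : ℕ}

noncomputable def sg (b : Bool) : ℝ := if b then 1 else -1

lemma sg_sq (b : Bool) : sg b ^ 2 = 1 := by cases b <;> simp [sg]

lemma card_omega : (Fintype.card (Fin n → Bool) : ℝ) = 2 ^ n := by
  simp [Fintype.card_fun]

lemma sum_prod_bool (f : Fin n → Bool → ℝ) :
    ∑ ω : Fin n → Bool, ∏ k, f k (ω k) = ∏ k, (f k true + f k false) := by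
  rw [← Fintype.prod_sum]
  congr 1; ext k; simp [Fintype.sum_bool]

noncomputable def XS (S : Finset (Fin n)) (c : Fin n → ℝ) (ω : Fin n → Bool) : ℝ :=
  ∑ k ∈ S, c k * sg (ω k)

lemma odd_sum (j : Fin n) (G : (Fin n → Bool) → ℝ)
    (hG : ∀ ω b, G (Function.update ω j b) = G ω) :
    ∑ ω : Fin n → Bool, G ω * sg (ω j) = 0 := by
  have hinv : Function.Involutive (fun ω : Fin n → Bool => Function.update ω j (!ω j)) := by
    intro ω
    simp [Function.update_idem]
  let e := hinv.toPerm
  have h1 : ∑ ω : Fin n → Bool, G ω * sg (ω j)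
      = ∑ ω : Fin n → Bool, G (e ω) * sg (e ω j) := (Equiv.sum_comp e _).symm
  have h2 : ∀ ω : Fin n → Bool, G (e ω) * sg (e ω j) = - (G ω * sg (ω j)) := by
    intro ω
    have hg : G (Function.update ω j (!ω j)) = G ω := hG ω _
    have hs : sg (!ω j) = - sg (ω j) := by cases (ω j) <;> simp [sg]
    simp only [e, Function.Involutive.coe_toPerm]
    rw [hg, Function.update_self, hs]
    ring
  have h3 : ∑ ω : Fin n → Bool, G (e ω) * sg (e ω j)
      = - ∑ ω : Fin n → Bool, G ω * sg (ω j) := by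
    simp only [h2]; exact Finset.sum_neg_distrib _
  linarith [h1.trans h3]

lemma XS_update (S : Finset (Fin n)) (c : Fin n → ℝ) {j : Fin n} (hj : j ∉ S)
    (ω : Fin n → Bool) (b : Bool) : XS S c (Function.update ω j b) = XS S c ω := by
  unfold XS
  refine Finset.sum_congr rfl fun k hk => ?_
  have hkj : k ≠ j := by rintro rfl; exact hj hk
  rw [Function.update_of_ne hkj]

lemma M2 (S : Finset (Fin n)) (c : Fin n → ℝ) :
    ∑ ω : Fin n → Bool, (XS S c ω) ^ 2 = 2 ^ n * ∑ k ∈ S, c k ^ 2 := by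
  classical
  induction S using Finset.induction_on with
  | empty => simp [XS]
  | @insert j S hj ih =>
    have hpt : ∀ ω : Fin n → Bool, (XS (insert j S) c ω) ^ 2
        = c j ^ 2 + (XS S c ω) ^ 2 + (2 * c j * XS S c ω) * sg (ω j) := by
      intro ω
      have hXi : XS (insert j S) c ω = c j * sg (ω j) + XS S c ω := by
        unfold XS; rw [Finset.sum_insert hj]
      rw [hXi]
      have ha : (sg (ω j)) ^ 2 = 1 := sg_sq _
      linear_combination (c j ^ 2) * ha
    simp only [hpt]
    rw [Finset.sum_add_distrib, Finset.sum_add_distrib, Finset.sum_const, ih,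
      odd_sum j _ (fun ω b => by rw [XS_update S c hj]), Finset.sum_insert hj,
      nsmul_eq_mul, Finset.card_univ, card_omega]
    ring

lemma M4 (S : Finset (Fin n)) (c : Fin n → ℝ) :
    ∑ ω : Fin n → Bool, (XS S c ω) ^ 4 ≤ 3 * 2 ^ n * (∑ k ∈ S, c k ^ 2) ^ 2 := by
  classical
  induction S using Finset.induction_on with
  | empty =>
    simp only [XS, Finset.sum_empty]
    norm_num
  | @insert j S hj ih =>
    have hpt : ∀ ω : Fin n → Bool, (XS (insert j S) c ω) ^ 4
        = (XS S c ω) ^ 4 + 6 * c j ^ 2 * (XS S c ω) ^ 2 + c j ^ 4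
          + (4 * c j * (XS S c ω) ^ 3 + 4 * c j ^ 3 * XS S c ω) * sg (ω j) := by
      intro ω
      have hXi : XS (insert j S) c ω = c j * sg (ω j) + XS S c ω := by
        unfold XS; rw [Finset.sum_insert hj]
      rw [hXi]
      have ha : (sg (ω j)) ^ 2 = 1 := sg_sq _
      linear_combination ((c j)^2 * (sg (ω j))^2 + c j ^ 2 + 4 * (c j * sg (ω j)) * (XS S c ω)
        + 6 * (XS S c ω) ^ 2) * (by linear_combination (c j ^ 2) * ha :
          (c j)^2 * (sg (ω j))^2 = c j ^ 2)
    simp only [hpt]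
    rw [Finset.sum_add_distrib, Finset.sum_add_distrib, Finset.sum_add_distrib,
      Finset.sum_const,
      odd_sum j _ (fun ω b => by rw [XS_update S c hj]), Finset.sum_insert hj,
      nsmul_eq_mul, Finset.card_univ, card_omega]
    have hM2 : ∑ ω : Fin n → Bool, 6 * c j ^ 2 * (XS S c ω) ^ 2
        = 6 * c j ^ 2 * (2 ^ n * ∑ k ∈ S, c k ^ 2) := by
      rw [← Finset.mul_sum, M2]
    rw [hM2]
    have h2n : (0:ℝ) < 2 ^ n := by positivity
    have hs2 : (0:ℝ) ≤ ∑ k ∈ S, c k ^ 2 := Finset.sum_nonneg fun k _ => sq_nonneg _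
    nlinarith [sq_nonneg (c j), sq_nonneg (c j ^ 2), ih]

lemma MGF (v : Fin n → ℝ) :
    ∑ ω : Fin n → Bool, Real.exp (∑ k, v k * sg (ω k))
      ≤ 2 ^ n * Real.exp ((∑ k, v k ^ 2) / 2) := by
  have h1 : ∀ ω : Fin n → Bool, Real.exp (∑ k, v k * sg (ω k))
      = ∏ k, Real.exp (v k * sg (ω k)) := fun ω => Real.exp_sum _ _
  simp only [h1]
  rw [show (∑ ω : Fin n → Bool, ∏ k, Real.exp (v k * sg (ω k)))
      = ∏ k, (Real.exp (v k * sg true) + Real.exp (v k * sg false)) from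
    sum_prod_bool fun k b => Real.exp (v k * sg b)]
  have hfac : ∀ k : Fin n, Real.exp (v k * sg true) + Real.exp (v k * sg false)
      ≤ 2 * Real.exp (v k ^ 2 / 2) := by
    intro k
    have : Real.exp (v k * sg true) + Real.exp (v k * sg false)
        = 2 * Real.cosh (v k) := by
      simp [sg, Real.cosh_eq]
      ring
    rw [this]
    have := Real.cosh_le_exp_half_sq (v k)
    nlinarith
  calc ∏ k, (Real.exp (v k * sg true) + Real.exp (v k * sg false))
      ≤ ∏ k : Fin n, 2 * Real.exp (v k ^ 2 / 2) := by
        refine Finset.prod_le_prod (fun k _ => by positivity) (fun k _ => hfac k)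
    _ = 2 ^ n * Real.exp ((∑ k, v k ^ 2) / 2) := by
        rw [Finset.prod_mul_distrib, Finset.prod_const, ← Real.exp_sum]
        simp [Finset.card_univ, ← Finset.sum_div]

lemma chernoff (v : Fin n → ℝ) {D L : ℝ} (hD : 0 < D) (hL : 0 ≤ L)
    (hv : ∑ k, v k ^ 2 ≤ D ^ 2) :
    ((filter (fun ω : Fin n → Bool =>
        D * Real.sqrt (2 * L) < |XS univ v ω|) univ).card : ℝ)
      ≤ 2 * 2 ^ n * Real.exp (-L) := by
  classical
  set t := D * Real.sqrt (2 * L) with ht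
  set lam := t / D ^ 2 with hlam
  have ht2 : t ^ 2 = 2 * L * D ^ 2 := by
    rw [ht, mul_pow, Real.sq_sqrt (by linarith)]; ring
  have htnn : 0 ≤ t := mul_nonneg hD.le (Real.sqrt_nonneg _)
  have hlamnn : 0 ≤ lam := div_nonneg htnn (by positivity)
  have hlamt : lam * t = 2 * L := by
    rw [hlam]; field_simp; linarith [ht2]
  have hlam2 : lam ^ 2 * D ^ 2 / 2 ≤ L := by
    rw [hlam]; rw [div_pow]; rw [div_mul_eq_mul_div, div_div]
    rw [div_le_iff₀ (by positivity)]
    nlinarith [ht2, sq_nonneg t]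
  set B := filter (fun ω : Fin n → Bool => t < |XS univ v ω|) univ with hB
  -- pointwise bound on B
  have hpt : ∀ ω ∈ B, Real.exp (lam * t)
      ≤ Real.exp (lam * XS univ v ω) + Real.exp (-(lam * XS univ v ω)) := by
    intro ω hω
    rw [hB, mem_filter] at hω
    have h1 : Real.exp (lam * t) ≤ Real.exp (lam * |XS univ v ω|) :=
      Real.exp_le_exp.2 (mul_le_mul_of_nonneg_left hω.2.le hlamnn)
    rcases abs_cases (XS univ v ω) with ⟨he, _⟩ | ⟨he, _⟩
    · refine h1.trans ?_
      rw [he]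
      nlinarith [Real.exp_pos (-(lam * XS univ v ω))]
    · refine h1.trans ?_
      rw [he, mul_neg]
      nlinarith [Real.exp_pos (lam * XS univ v ω)]
  have hcard : (B.card : ℝ) * Real.exp (lam * t)
      ≤ ∑ ω : Fin n → Bool, (Real.exp (lam * XS univ v ω) + Real.exp (-(lam * XS univ v ω))) := by
    calc (B.card : ℝ) * Real.exp (lam * t) = ∑ _ω ∈ B, Real.exp (lam * t) := by
          rw [Finset.sum_const, nsmul_eq_mul]
      _ ≤ ∑ ω ∈ B, (Real.exp (lam * XS univ v ω) + Real.exp (-(lam * XS univ v ω))) :=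
          Finset.sum_le_sum hpt
      _ ≤ _ := Finset.sum_le_sum_of_subset_of_nonneg (filter_subset _ _)
          (fun ω _ _ => by positivity)
  -- MGF bounds
  have hm1 : ∑ ω : Fin n → Bool, Real.exp (lam * XS univ v ω)
      ≤ 2 ^ n * Real.exp (L) := by
    have h := MGF (fun k => lam * v k)
    have he : ∀ ω : Fin n → Bool, lam * XS univ v ω = ∑ k, (lam * v k) * sg (ω k) := by
      intro ω; rw [XS, Finset.mul_sum]; exact Finset.sum_congr rfl fun k _ => by ring
    simp only [he]
    refine h.trans ?_
    refine mul_le_mul_of_nonneg_left (Real.exp_le_exp.2 ?_) (by positivity)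
    have : ∑ k, (lam * v k) ^ 2 = lam ^ 2 * ∑ k, v k ^ 2 := by
      rw [Finset.mul_sum]; exact Finset.sum_congr rfl fun k _ => by ring
    rw [this]
    calc (lam ^ 2 * ∑ k, v k ^ 2) / 2 ≤ lam ^ 2 * D ^ 2 / 2 := by
          have := mul_le_mul_of_nonneg_left hv (sq_nonneg lam)
          linarith
      _ ≤ L := hlam2
  have hm2 : ∑ ω : Fin n → Bool, Real.exp (-(lam * XS univ v ω))
      ≤ 2 ^ n * Real.exp (L) := by
    have h := MGF (fun k => -lam * v k)
    have he : ∀ ω : Fin n → Bool, -(lam * XS univ v ω) = ∑ k, (-lam * v k) * sg (ω k) := by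
      intro ω; rw [XS, Finset.mul_sum, ← Finset.sum_neg_distrib]
      exact Finset.sum_congr rfl fun k _ => by ring
    simp only [he]
    refine h.trans ?_
    refine mul_le_mul_of_nonneg_left (Real.exp_le_exp.2 ?_) (by positivity)
    have hthis : ∑ k, (-lam * v k) ^ 2 = lam ^ 2 * ∑ k, v k ^ 2 := by
      rw [Finset.mul_sum]; exact Finset.sum_congr rfl fun k _ => by ring
    rw [hthis]
    calc (lam ^ 2 * ∑ k, v k ^ 2) / 2 ≤ lam ^ 2 * D ^ 2 / 2 := by
          have := mul_le_mul_of_nonneg_left hv (sq_nonneg lam)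
          linarith
      _ ≤ L := hlam2
  -- combine
  rw [Finset.sum_add_distrib] at hcard
  have hfinal : (B.card : ℝ) * Real.exp (lam * t) ≤ 2 * 2 ^ n * Real.exp (L) := by
    calc (B.card : ℝ) * Real.exp (lam * t) ≤ _ := hcard
      _ ≤ 2 ^ n * Real.exp (L) + 2 ^ n * Real.exp (L) := add_le_add hm1 hm2
      _ = 2 * 2 ^ n * Real.exp (L) := by ring
  rw [hlamt] at hfinal
  have hexp : Real.exp (2 * L) = Real.exp L * Real.exp L := by
    rw [← Real.exp_add]; ring_nf
  have hpos : (0:ℝ) < Real.exp L := Real.exp_pos _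
  rw [← mul_le_mul_iff_left₀ hpos]
  calc (B.card : ℝ) * Real.exp L
      ≤ 2 * 2 ^ n := by
        by_contra hcon
        push_neg at hcon
        have h2 : 2 * 2 ^ n * Real.exp L < (B.card : ℝ) * Real.exp L * Real.exp L :=
          mul_lt_mul_of_pos_right hcon hpos
        rw [hexp] at hfinal
        nlinarith [h2, hfinal]
      _ = 2 * 2 ^ n * (Real.exp (-L) * Real.exp L) := by
        rw [← Real.exp_add]; simp
      _ = 2 * 2 ^ n * Real.exp (-L) * Real.exp L := by ring

lemma pz (Z : (Fin n → Bool) → ℝ) (hZnn : ∀ ω, 0 ≤ Z ω) (hn : 1 ≤ n)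
    (hEZ : ∑ ω : Fin n → Bool, Z ω = 2 ^ n * n)
    (hEZ2 : ∑ ω : Fin n → Bool, Z ω ^ 2 ≤ 3 * 2 ^ n * (n:ℝ) ^ 2) :
    (2:ℝ) ^ n / 12 ≤ ((filter (fun ω : Fin n → Bool => (n:ℝ)/2 ≤ Z ω) univ).card : ℝ) := by
  classical
  set T := filter (fun ω : Fin n → Bool => (n:ℝ)/2 ≤ Z ω) univ with hT
  have hsplit := Finset.sum_filter_add_sum_filter_not univ
    (fun ω : Fin n → Bool => (n:ℝ)/2 ≤ Z ω) Z
  have hcompl : ∑ ω ∈ filter (fun ω : Fin n → Bool => ¬ ((n:ℝ)/2 ≤ Z ω)) univ, Z ω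
      ≤ 2 ^ n * ((n:ℝ)/2) := by
    calc ∑ ω ∈ filter (fun ω : Fin n → Bool => ¬ ((n:ℝ)/2 ≤ Z ω)) univ, Z ω
        ≤ (filter (fun ω : Fin n → Bool => ¬ ((n:ℝ)/2 ≤ Z ω)) univ).card • ((n:ℝ)/2) :=
          Finset.sum_le_card_nsmul _ _ _ (fun ω hω => (lt_of_not_ge (mem_filter.mp hω).2).le)
      _ ≤ (2:ℝ) ^ n * ((n:ℝ)/2) := by
          rw [nsmul_eq_mul]
          refine mul_le_mul_of_nonneg_right ?_ (by positivity)
          calc ((filter _ univ).card : ℝ) ≤ ((univ : Finset (Fin n → Bool)).card : ℝ) := by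
                exact_mod_cast Finset.card_le_card (filter_subset _ _)
            _ = 2 ^ n := by rw [Finset.card_univ]; simp [Fintype.card_fun]
  have hTsum : 2 ^ n * (n:ℝ) / 2 ≤ ∑ ω ∈ T, Z ω := by
    have := hsplit
    rw [hEZ] at this
    linarith [hcompl]
  have hCS : (∑ ω ∈ T, Z ω) ^ 2 ≤ (∑ ω ∈ T, Z ω ^ 2) * T.card := by
    have h := Finset.sum_mul_sq_le_sq_mul_sq T Z (fun _ => 1)
    simpa using h
  have hZ2T : ∑ ω ∈ T, Z ω ^ 2 ≤ 3 * 2 ^ n * (n:ℝ) ^ 2 := by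
    refine le_trans (Finset.sum_le_sum_of_subset_of_nonneg (filter_subset _ _)
      (fun ω _ _ => sq_nonneg _)) hEZ2
  have hsq : (2 ^ n * (n:ℝ) / 2) ^ 2 ≤ (3 * 2 ^ n * (n:ℝ) ^ 2) * T.card := by
    calc (2 ^ n * (n:ℝ) / 2) ^ 2 ≤ (∑ ω ∈ T, Z ω) ^ 2 :=
          pow_le_pow_left₀ (by positivity) hTsum 2
      _ ≤ (∑ ω ∈ T, Z ω ^ 2) * T.card := hCS
      _ ≤ (3 * 2 ^ n * (n:ℝ) ^ 2) * T.card := by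
          refine mul_le_mul_of_nonneg_right hZ2T (by positivity)
  have hP : (0:ℝ) < 2 ^ n := by positivity
  have hN : (1:ℝ) ≤ (n:ℝ) := by exact_mod_cast hn
  nlinarith [hsq, mul_pos hP (mul_pos (by positivity : (0:ℝ) < (n:ℝ)^2) hP)]

end Base

lemma core {m n : ℕ} (hm : 2 ≤ m) (hn : 1 ≤ n) (A : Matrix (Fin m) (Fin n) ℝ)
    (u : Fin n → Fin n → ℝ) (hu : ∀ j, ∑ k, u j k ^ 2 = 1)
    {D : ℝ} (hD : 0 < D)
    (hv : ∀ i, ∑ k, (∑ j, A i j * u j k) ^ 2 ≤ D ^ 2) :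
    ∃ x : Fin n → ℝ, (∑ j, x j ^ 2) = (n:ℝ) ∧
      ∀ i, |∑ j, A i j * x j| ≤ 2 * D * Real.sqrt (Real.log (25 * m)) := by
  classical
  set v : Fin m → Fin n → ℝ := fun i k => ∑ j, A i j * u j k with hvdef
  set L := Real.log (25 * m) with hLdef
  have h25m : (1:ℝ) ≤ 25 * m := by
    have : (2:ℝ) ≤ (m:ℝ) := by exact_mod_cast hm
    nlinarith
  have hL : 0 ≤ L := Real.log_nonneg h25m
  set t := D * Real.sqrt (2 * L) with ht
  set X : Fin n → (Fin n → Bool) → ℝ := fun j ω => XS univ (u j) ω with hXdef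
  set Z : (Fin n → Bool) → ℝ := fun ω => ∑ j, (X j ω) ^ 2 with hZdef
  have hswap : ∀ (i : Fin m) (ω : Fin n → Bool),
      ∑ j, A i j * X j ω = XS univ (v i) ω := by
    intro i ω
    calc ∑ j, A i j * X j ω = ∑ j, ∑ k, A i j * (u j k * sg (ω k)) := by
          refine Finset.sum_congr rfl fun j _ => ?_
          rw [hXdef]
          simp only [XS, Finset.mul_sum]
      _ = ∑ k, ∑ j, A i j * (u j k * sg (ω k)) := Finset.sum_comm
      _ = ∑ k, v i k * sg (ω k) := by
          refine Finset.sum_congr rfl fun k _ => ?_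
          rw [hvdef]
          simp only [Finset.sum_mul]
          refine Finset.sum_congr rfl fun j _ => by ring
      _ = XS univ (v i) ω := rfl
  -- first moment of Z
  have hEZ : ∑ ω : Fin n → Bool, Z ω = 2 ^ n * n := by
    rw [hZdef]
    rw [Finset.sum_comm]
    calc ∑ j, ∑ ω : Fin n → Bool, (X j ω) ^ 2 = ∑ j : Fin n, (2:ℝ) ^ n * 1 := by
          refine Finset.sum_congr rfl fun j _ => ?_
          rw [hXdef, M2, hu j]
      _ = 2 ^ n * n := by simp [Finset.sum_const]; ring
  -- second moment of Z
  have hEZ2 : ∑ ω : Fin n → Bool, Z ω ^ 2 ≤ 3 * 2 ^ n * (n:ℝ) ^ 2 := by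
    have hpair : ∀ j j' : Fin n,
        ∑ ω : Fin n → Bool, (X j ω) ^ 2 * (X j' ω) ^ 2 ≤ 3 * 2 ^ n := by
      intro j j'
      have hcs := Finset.sum_mul_sq_le_sq_mul_sq univ
        (fun ω : Fin n → Bool => (X j ω) ^ 2) (fun ω => (X j' ω) ^ 2)
      have h4 : ∀ jj : Fin n, ∑ ω : Fin n → Bool, ((X jj ω) ^ 2) ^ 2 ≤ 3 * 2 ^ n := by
        intro jj
        have := M4 univ (u jj)
        rw [hu jj] at this
        simp only [one_pow, mul_one] at this
        calc ∑ ω : Fin n → Bool, ((X jj ω) ^ 2) ^ 2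
            = ∑ ω : Fin n → Bool, (XS univ (u jj) ω) ^ 4 := by
              refine Finset.sum_congr rfl fun ω _ => by rw [hXdef]; ring
          _ ≤ 3 * 2 ^ n := this
      have hnn : (0:ℝ) ≤ ∑ ω : Fin n → Bool, (X j ω) ^ 2 * (X j' ω) ^ 2 :=
        Finset.sum_nonneg fun ω _ => mul_nonneg (sq_nonneg _) (sq_nonneg _)
      have hsq : (∑ ω : Fin n → Bool, (X j ω) ^ 2 * (X j' ω) ^ 2) ^ 2
          ≤ (3 * 2 ^ n) ^ 2 := by
        calc (∑ ω : Fin n → Bool, (X j ω) ^ 2 * (X j' ω) ^ 2) ^ 2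
            ≤ (∑ ω : Fin n → Bool, ((X j ω) ^ 2) ^ 2)
              * (∑ ω : Fin n → Bool, ((X j' ω) ^ 2) ^ 2) := hcs
          _ ≤ (3 * 2 ^ n) ^ 2 := by
              rw [sq]
              refine mul_le_mul (h4 j) (h4 j') ?_ (by positivity)
              exact Finset.sum_nonneg fun ω _ => sq_nonneg _
      nlinarith [hnn, hsq, (by positivity : (0:ℝ) < 3 * 2 ^ n)]
    calc ∑ ω : Fin n → Bool, Z ω ^ 2
        = ∑ ω : Fin n → Bool, ∑ j : Fin n, ∑ j' : Fin n, (X j ω) ^ 2 * (X j' ω) ^ 2 := by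
          refine Finset.sum_congr rfl fun ω _ => ?_
          rw [hZdef, sq, Finset.sum_mul_sum]
      _ = ∑ j : Fin n, ∑ j' : Fin n, ∑ ω : Fin n → Bool, (X j ω) ^ 2 * (X j' ω) ^ 2 := by
          rw [Finset.sum_comm]
          exact Finset.sum_congr rfl fun j _ => Finset.sum_comm
      _ ≤ ∑ j : Fin n, ∑ j' : Fin n, (3:ℝ) * 2 ^ n :=
          Finset.sum_le_sum fun j _ => Finset.sum_le_sum fun j' _ => hpair j j'
      _ = 3 * 2 ^ n * (n:ℝ) ^ 2 := by simp [Finset.sum_const]; ring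
  -- Paley-Zygmund
  have hPZ := pz Z (fun ω => Finset.sum_nonneg fun j _ => sq_nonneg _) hn hEZ hEZ2
  -- Chernoff
  have hch : ∀ i : Fin m,
      ((filter (fun ω : Fin n → Bool => t < |XS univ (v i) ω|) univ).card : ℝ)
        ≤ 2 * 2 ^ n / (25 * m) := by
    intro i
    have h := chernoff (v i) hD hL (hv i)
    rw [← ht] at h
    refine h.trans (le_of_eq ?_)
    rw [hLdef, Real.exp_neg, Real.exp_log (by linarith : (0:ℝ) < 25 * m)]
    ring
  -- good set
  set T := filter (fun ω : Fin n → Bool => (n:ℝ)/2 ≤ Z ω) univ with hTdef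
  set U := Finset.biUnion univ
    (fun i : Fin m => filter (fun ω : Fin n → Bool => t < |XS univ (v i) ω|) univ) with hUdef
  have hsub : T ⊆ (T \ U) ∪ U := by
    intro ω hω
    by_cases h : ω ∈ U
    · exact Finset.mem_union_right _ h
    · exact Finset.mem_union_left _ (Finset.mem_sdiff.mpr ⟨hω, h⟩)
  have hcards : (T.card : ℝ) ≤ ((T \ U).card : ℝ) + ∑ i : Fin m,
      ((filter (fun ω : Fin n → Bool => t < |XS univ (v i) ω|) univ).card : ℝ) := by
    have h1 : T.card ≤ (T \ U).card + U.card :=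
      (Finset.card_le_card hsub).trans (Finset.card_union_le _ _)
    have h2 : U.card ≤ ∑ i : Fin m,
        (filter (fun ω : Fin n → Bool => t < |XS univ (v i) ω|) univ).card :=
      Finset.card_biUnion_le
    push_cast
    exact_mod_cast le_trans (Nat.cast_le.mpr h1) (by push_cast; exact_mod_cast add_le_add_right (Nat.cast_le.mpr h2) _)
  have hUcard : ∑ i : Fin m,
      ((filter (fun ω : Fin n → Bool => t < |XS univ (v i) ω|) univ).card : ℝ)
        ≤ (2:ℝ) / 25 * 2 ^ n := by
    calc ∑ i : Fin m, ((filter (fun ω : Fin n → Bool => t < |XS univ (v i) ω|) univ).card : ℝ)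
        ≤ ∑ _i : Fin m, (2 * 2 ^ n / (25 * (m:ℝ)) : ℝ) := Finset.sum_le_sum fun i _ => hch i
      _ = (2:ℝ) / 25 * 2 ^ n := by
          rw [Finset.sum_const, nsmul_eq_mul, Finset.card_univ, Fintype.card_fin]
          have hmpos : (0:ℝ) < m := by
            have : (2:ℝ) ≤ (m:ℝ) := by exact_mod_cast hm
            linarith
          field_simp
  have hgood : (0:ℝ) < ((T \ U).card : ℝ) := by
    have : (2:ℝ) ^ n / 12 ≤ ((T \ U).card : ℝ) + 2 / 25 * 2 ^ n := by
      calc (2:ℝ) ^ n / 12 ≤ (T.card : ℝ) := hPZ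
        _ ≤ _ := hcards
        _ ≤ ((T \ U).card : ℝ) + 2 / 25 * 2 ^ n := by linarith [hUcard]
    have h2n : (0:ℝ) < 2 ^ n := by positivity
    linarith
  obtain ⟨ω₀, hω₀⟩ := Finset.card_pos.mp (by exact_mod_cast hgood)
  obtain ⟨hω₀T, hω₀U⟩ := Finset.mem_sdiff.mp hω₀
  have hZ0 : (n:ℝ)/2 ≤ Z ω₀ := (Finset.mem_filter.mp hω₀T).2
  have hY0 : ∀ i : Fin m, |XS univ (v i) ω₀| ≤ t := by
    intro i
    by_contra h
    push_neg at h
    exact hω₀U (Finset.mem_biUnion.mpr ⟨i, Finset.mem_univ i,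
      Finset.mem_filter.mpr ⟨Finset.mem_univ ω₀, h⟩⟩)
  have hnpos : (0:ℝ) < (n:ℝ) := by exact_mod_cast Nat.lt_of_lt_of_le Nat.zero_lt_one hn
  have hZpos : (0:ℝ) < Z ω₀ := lt_of_lt_of_le (by linarith) hZ0
  set r := Real.sqrt ((n:ℝ) / Z ω₀) with hr
  have hr2 : r ^ 2 = (n:ℝ) / Z ω₀ := Real.sq_sqrt (by positivity)
  refine ⟨fun j => r * X j ω₀, ?_, ?_⟩
  · have : ∑ j, (r * X j ω₀) ^ 2 = r ^ 2 * Z ω₀ := by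
      rw [hZdef, Finset.mul_sum]
      exact Finset.sum_congr rfl fun j _ => by ring
    rw [this, hr2]
    field_simp
  · intro i
    have hlin : ∑ j, A i j * (r * X j ω₀) = r * XS univ (v i) ω₀ := by
      rw [← hswap i ω₀, Finset.mul_sum]
      exact Finset.sum_congr rfl fun j _ => by ring
    rw [hlin, abs_mul, abs_of_nonneg (Real.sqrt_nonneg _)]
    have hrle : r ≤ Real.sqrt 2 := by
      rw [hr]
      refine Real.sqrt_le_sqrt ?_
      rw [div_le_iff₀ hZpos]
      linarith
    have htnn : 0 ≤ t := mul_nonneg hD.le (Real.sqrt_nonneg _)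
    calc r * |XS univ (v i) ω₀| ≤ Real.sqrt 2 * t := by
          exact mul_le_mul hrle (hY0 i) (abs_nonneg _) (Real.sqrt_nonneg _)
      _ = 2 * D * Real.sqrt L := by
          rw [ht]
          rw [show Real.sqrt 2 * (D * Real.sqrt (2 * L)) = D * (Real.sqrt 2 * Real.sqrt (2 * L)) by ring]
          rw [← Real.sqrt_mul (by norm_num : (0:ℝ) ≤ 2), show (2:ℝ) * (2 * L) = 4 * L by ring,
            Real.sqrt_mul (by norm_num : (0:ℝ) ≤ 4),
            show Real.sqrt 4 = 2 by
              rw [show (4:ℝ) = 2 ^ 2 by norm_num, Real.sqrt_sq (by norm_num : (0:ℝ) ≤ 2)]]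
          ring

lemma det_branch {m n : ℕ} (hn : 1 ≤ n) (A : Matrix (Fin m) (Fin n) ℝ)
    (u : Fin n → Fin n → ℝ) (hu : ∀ j, ∑ k, u j k ^ 2 = 1)
    {D : ℝ} (hD : 0 ≤ D)
    (hv : ∀ i, ∑ k, (∑ j, A i j * u j k) ^ 2 ≤ D ^ 2) :
    ∃ x : Fin n → ℝ, (∑ j, x j ^ 2) = (n:ℝ) ∧
      ∀ i, |∑ j, A i j * x j| ≤ Real.sqrt n * D := by
  classical
  have hne : (univ : Finset (Fin n)).Nonempty := by
    have : Nonempty (Fin n) := ⟨⟨0, hn⟩⟩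
    exact univ_nonempty
  have htotal : ∑ k : Fin n, ∑ j : Fin n, u j k ^ 2 = (n:ℝ) := by
    rw [Finset.sum_comm]
    calc ∑ j : Fin n, ∑ k : Fin n, u j k ^ 2 = ∑ j : Fin n, (1:ℝ) :=
        Finset.sum_congr rfl fun j _ => hu j
      _ = (n:ℝ) := by simp
  have hex : ∃ k₀ : Fin n, 1 ≤ ∑ j : Fin n, u j k₀ ^ 2 := by
    by_contra h
    push_neg at h
    have := Finset.sum_lt_sum_of_nonempty hne (fun k _ => h k)
    rw [htotal] at this
    simp at this
  obtain ⟨k₀, hk₀⟩ := hex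
  set W := ∑ j : Fin n, u j k₀ ^ 2 with hW
  have hWpos : (0:ℝ) < W := lt_of_lt_of_le one_pos hk₀
  set r := Real.sqrt ((n:ℝ) / W) with hr
  have hnpos : (0:ℝ) < n := by exact_mod_cast hn
  have hr2 : r ^ 2 = (n:ℝ) / W := Real.sq_sqrt (by positivity)
  refine ⟨fun j => r * u j k₀, ?_, ?_⟩
  · have : ∑ j, (r * u j k₀) ^ 2 = r ^ 2 * W := by
      rw [hW, Finset.mul_sum]
      exact Finset.sum_congr rfl fun j _ => by ring
    rw [this, hr2]; field_simp
  · intro i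
    have hlin : ∑ j, A i j * (r * u j k₀) = r * ∑ j, A i j * u j k₀ := by
      rw [Finset.mul_sum]; exact Finset.sum_congr rfl fun j _ => by ring
    rw [hlin, abs_mul, abs_of_nonneg (Real.sqrt_nonneg _)]
    have h1 : |∑ j, A i j * u j k₀| ≤ D := by
      have hsingle : (∑ j, A i j * u j k₀) ^ 2 ≤ ∑ k, (∑ j, A i j * u j k) ^ 2 :=
        Finset.single_le_sum (f := fun k => (∑ j, A i j * u j k) ^ 2)
          (fun k _ => sq_nonneg _) (Finset.mem_univ k₀)
      have := hsingle.trans (hv i)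
      calc |∑ j, A i j * u j k₀| = Real.sqrt ((∑ j, A i j * u j k₀) ^ 2) :=
            (Real.sqrt_sq_eq_abs _).symm
        _ ≤ Real.sqrt (D ^ 2) := Real.sqrt_le_sqrt this
        _ = D := Real.sqrt_sq hD
    have h2 : r ≤ Real.sqrt n := by
      rw [hr]
      refine Real.sqrt_le_sqrt ?_
      rw [div_le_iff₀ hWpos]
      nlinarith
    exact mul_le_mul h2 h1 (abs_nonneg _) (Real.sqrt_nonneg _)

lemma supNorm_nonneg {m : ℕ} (v : Fin m → ℝ) : 0 ≤ supNorm v :=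
  Real.iSup_nonneg fun i => abs_nonneg _

lemma discS_le {m n : ℕ} (hm : 2 ≤ m) (A : Matrix (Fin m) (Fin n) ℝ)
    (x : Fin n → ℝ) (hx : ∑ j, x j ^ 2 = (n:ℝ)) {b : ℝ}
    (hb : ∀ i, |∑ j, A i j * x j| ≤ b) : discS A ≤ b := by
  have : Nonempty (Fin m) := ⟨⟨0, by omega⟩⟩
  have hmem : supNorm (A.mulVec x) ∈
      { d | ∃ x : Fin n → ℝ, e2 x = Real.sqrt n ∧ d = supNorm (A.mulVec x) } :=
    ⟨x, by rw [e2, hx], rfl⟩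
  have hbdd : BddBelow { d : ℝ | ∃ x : Fin n → ℝ, e2 x = Real.sqrt n ∧
      d = supNorm (A.mulVec x) } := by
    refine ⟨0, fun d hd => ?_⟩
    obtain ⟨y, _, rfl⟩ := hd
    exact supNorm_nonneg _
  refine (csInf_le hbdd hmem).trans ?_
  refine ciSup_le fun i => ?_
  have : A.mulVec x i = ∑ j, A i j * x j := by
    simp [Matrix.mulVec, dotProduct]
  rw [this]
  exact hb i

lemma discV_set_nonempty {m n : ℕ} (A : Matrix (Fin m) (Fin n) ℝ) :
    { d | ∃ u : Fin n → (Fin n → ℝ), (∀ j, e2 (u j) = 1) ∧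
      d = ⨆ i, e2 (fun k => ∑ j, A i j * u j k) }.Nonempty := by
  classical
  refine ⟨_, fun j k => if k = j then 1 else 0, fun j => ?_, rfl⟩
  rw [e2]
  have : ∑ k : Fin n, (if k = j then (1:ℝ) else 0) ^ 2 = 1 := by
    rw [Finset.sum_congr rfl (fun k _ => by split_ifs <;> norm_num :
      ∀ k ∈ univ, (if k = j then (1:ℝ) else 0) ^ 2 = if k = j then 1 else 0)]
    simp
  rw [this, Real.sqrt_one]

lemma discV_bddBelow {m n : ℕ} (A : Matrix (Fin m) (Fin n) ℝ) :
    BddBelow { d | ∃ u : Fin n → (Fin n → ℝ), (∀ j, e2 (u j) = 1) ∧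
      d = ⨆ i, e2 (fun k => ∑ j, A i j * u j k) } := by
  refine ⟨0, fun d hd => ?_⟩
  obtain ⟨u, _, rfl⟩ := hd
  exact Real.iSup_nonneg fun i => Real.sqrt_nonneg _

lemma discV_nonneg {m n : ℕ} (A : Matrix (Fin m) (Fin n) ℝ) : 0 ≤ discV A := by
  rw [discV]
  refine le_csInf (discV_set_nonempty A) fun d hd => ?_
  obtain ⟨u, _, rfl⟩ := hd
  exact Real.iSup_nonneg fun i => Real.sqrt_nonneg _

end D7

theorem stmt_7 :
    ∃ C : ℝ, 0 < C ∧
      ∀ (m n : ℕ), 2 ≤ m → 1 ≤ n →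
        ∀ A : Matrix (Fin m) (Fin n) ℝ,
          discS A ≤ C * Real.sqrt (min (n : ℝ) (Real.log m)) * discV A := by
  refine ⟨5, by norm_num, fun m n hm hn A => ?_⟩
  have hm1 : (1:ℝ) < (m:ℝ) := by exact_mod_cast Nat.lt_of_lt_of_le Nat.one_lt_two hm
  have hlogm : 0 < Real.log m := Real.log_pos hm1
  have hnpos : (0:ℝ) < (n:ℝ) := by exact_mod_cast hn
  have hminpos : 0 < min (n:ℝ) (Real.log m) := lt_min hnpos hlogm
  set K := 5 * Real.sqrt (min (n:ℝ) (Real.log m)) with hK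
  have hKpos : 0 < K := by positivity
  show discS A ≤ K * discV A
  refine le_of_forall_pos_le_add fun ε hε => ?_
  set δ := ε / K with hδdef
  have hδ : 0 < δ := div_pos hε hKpos
  -- near-optimal u
  have hlt : discV A < discV A + δ := lt_add_of_pos_right _ hδ
  obtain ⟨d, hdmem, hdlt⟩ := (csInf_lt_iff (D7.discV_bddBelow A)
    (D7.discV_set_nonempty A)).mp hlt
  obtain ⟨u, hu, rfl⟩ := hdmem
  set D := discV A + δ with hDdef
  have hDpos : 0 < D := add_pos_of_nonneg_of_pos (D7.discV_nonneg A) hδ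
  have hu' : ∀ j, ∑ k, u j k ^ 2 = 1 := by
    intro j
    have h := hu j
    rw [e2] at h
    have hnn : (0:ℝ) ≤ ∑ k, u j k ^ 2 := Finset.sum_nonneg fun k _ => sq_nonneg _
    have h2 := Real.sq_sqrt hnn
    rw [h] at h2
    simpa using h2.symm
  have hvD : ∀ i, ∑ k, (∑ j, A i j * u j k) ^ 2 ≤ D ^ 2 := by
    intro i
    have hbdd : BddAbove (Set.range fun i : Fin m =>
        e2 (fun k => ∑ j, A i j * u j k)) := Set.Finite.bddAbove (Set.finite_range _)
    have hle : e2 (fun k => ∑ j, A i j * u j k) ≤ D :=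
      le_of_lt (lt_of_le_of_lt (le_ciSup hbdd i) hdlt)
    rw [e2] at hle
    have hnn : (0:ℝ) ≤ ∑ k, (∑ j, A i j * u j k) ^ 2 :=
      Finset.sum_nonneg fun k _ => sq_nonneg _
    calc ∑ k, (∑ j, A i j * u j k) ^ 2
        = Real.sqrt (∑ k, (∑ j, A i j * u j k) ^ 2) ^ 2 := (Real.sq_sqrt hnn).symm
      _ ≤ D ^ 2 := pow_le_pow_left₀ (Real.sqrt_nonneg _) hle 2
  have hKδ : K * δ = ε := by
    rw [hδdef]; field_simp
  by_cases hcase : Real.log m ≤ (n:ℝ)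
  · -- log branch
    have hmin : min (n:ℝ) (Real.log m) = Real.log m := min_eq_right hcase
    obtain ⟨x, hx, hbx⟩ := D7.core hm hn A u hu' hDpos hvD
    have hmain : discS A ≤ 2 * D * Real.sqrt (Real.log (25 * m)) :=
      D7.discS_le hm A x hx hbx
    have hlogle : Real.log (25 * m) ≤ 6.25 * Real.log m := by
      have hmne : (m:ℝ) ≠ 0 := by positivity
      rw [Real.log_mul (by norm_num) hmne]
      have h1 : (4:ℝ) * Real.log 25 ≤ 21 * Real.log 2 := by
        have h := Real.log_le_log (by norm_num : (0:ℝ) < 390625)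
          (by norm_num : (390625:ℝ) ≤ 2097152)
        rw [show (390625:ℝ) = 25 ^ 4 by norm_num,
          show (2097152:ℝ) = 2 ^ 21 by norm_num, Real.log_pow, Real.log_pow] at h
        push_cast at h
        linarith
      have hm2 : (2:ℝ) ≤ (m:ℝ) := by exact_mod_cast hm
      have h2 : Real.log 2 ≤ Real.log m := Real.log_le_log (by norm_num) hm2
      nlinarith [Real.log_nonneg (by norm_num : (1:ℝ) ≤ 25)]
    have hsqrtle : Real.sqrt (Real.log (25 * m)) ≤ 2.5 * Real.sqrt (Real.log m) := by
      calc Real.sqrt (Real.log (25 * m)) ≤ Real.sqrt (6.25 * Real.log m) :=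
            Real.sqrt_le_sqrt hlogle
        _ = 2.5 * Real.sqrt (Real.log m) := by
            rw [Real.sqrt_mul (by norm_num) _,
              show (6.25:ℝ) = 2.5 ^ 2 by norm_num,
              Real.sqrt_sq (by norm_num : (0:ℝ) ≤ 2.5)]
    calc discS A ≤ 2 * D * Real.sqrt (Real.log (25 * m)) := hmain
      _ ≤ 2 * D * (2.5 * Real.sqrt (Real.log m)) := by
          refine mul_le_mul_of_nonneg_left hsqrtle (by positivity)
      _ = K * D := by rw [hK, hmin]; ring
      _ = K * discV A + ε := by rw [hDdef, mul_add, hKδ]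
  · -- n branch
    push_neg at hcase
    have hmin : min (n:ℝ) (Real.log m) = (n:ℝ) := min_eq_left hcase.le
    obtain ⟨x, hx, hbx⟩ := D7.det_branch hn A u hu' hDpos.le hvD
    have hmain : discS A ≤ Real.sqrt n * D := D7.discS_le hm A x hx hbx
    calc discS A ≤ Real.sqrt n * D := hmain
      _ ≤ K * D := by
          rw [hK, hmin]
          refine mul_le_mul_of_nonneg_right ?_ hDpos.le
          nlinarith [Real.sqrt_nonneg (n:ℝ)]
      _ = K * discV A + ε := by rw [hDdef, mul_add, hKδ]
end

section
/- Let n ≥ 1 and let N ⊂ S^{n−1} ⊂ ℝⁿ be a finite 1/2-net of the unit sphere, i.e., for every a ∈ ℝⁿ with ‖a‖₂ = 1 there exists b ∈ N with ‖a − b‖₂ ≤ 1/2. Let A be the |N| × n matrix whose rows are the elements of N. Then disc_v(A) ≤ 1 (witnessed by taking u_j = e_j, the standard basis vectors), while disc_s(A) ≥ √n/2, i.e., for every x ∈ ℝⁿ with ‖x‖₂ = √n one has max_{b∈N} |⟨b, x⟩| ≥ √n/2. -/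
lemma e2_sq {n : ℕ} (x : Fin n → ℝ) : e2 x ^ 2 = ∑ j, x j ^ 2 :=
  Real.sq_sqrt (Finset.sum_nonneg fun j _ => sq_nonneg _)

lemma e2_nonneg {n : ℕ} (x : Fin n → ℝ) : 0 ≤ e2 x := Real.sqrt_nonneg _

lemma e2_smul {n : ℕ} (c : ℝ) (x : Fin n → ℝ) :
    e2 (fun j => c * x j) = |c| * e2 x := by
  unfold e2
  rw [← Real.sqrt_sq_eq_abs, ← Real.sqrt_mul (sq_nonneg c), Finset.mul_sum]
  congr 1
  exact Finset.sum_congr rfl fun j _ => by ring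

lemma basis_sum {n : ℕ} (b : Fin n → ℝ) (k : Fin n) :
    (∑ j, b j * (if j = k then (1 : ℝ) else 0)) = b k := by
  simp [mul_ite]

theorem stmt_8 {n : ℕ} (hn : 1 ≤ n) (N : Finset (Fin n → ℝ))
    (hunit : ∀ b ∈ N, e2 b = 1)
    (hnet : ∀ a : Fin n → ℝ, e2 a = 1 → ∃ b ∈ N, e2 (a - b) ≤ 1 / 2) :
    -- vector discrepancy of the matrix whose rows are the elements of N is at most 1,
    -- witnessed by the standard basis vectors u_j = e_j
    ((∀ b ∈ N, e2 (fun k => ∑ j, b j * (if j = k then (1 : ℝ) else 0)) ≤ 1) ∧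
      ∃ u : Fin n → (Fin n → ℝ), (∀ j, e2 (u j) = 1) ∧
        ∀ b ∈ N, e2 (fun k => ∑ j, b j * u j k) ≤ 1) ∧
    -- while its spherical discrepancy is at least √n / 2
    (∀ x : Fin n → ℝ, e2 x = Real.sqrt n →
      ∃ b ∈ N, Real.sqrt n / 2 ≤ |∑ j, b j * x j|) := by
  have hrow : ∀ b ∈ N, e2 (fun k => ∑ j, b j * (if j = k then (1 : ℝ) else 0)) ≤ 1 := by
    intro b hb
    have : (fun k => ∑ j, b j * (if j = k then (1 : ℝ) else 0)) = b := by
      funext k; exact basis_sum b k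
    rw [this, hunit b hb]
  refine ⟨⟨hrow, ⟨fun j k => if j = k then 1 else 0, ?_, hrow⟩⟩, ?_⟩
  · intro j
    unfold e2
    have : ∀ k, (if j = k then (1 : ℝ) else 0) ^ 2 = if j = k then 1 else 0 := by
      intro k; split <;> norm_num
    simp only [this, Finset.sum_ite_eq, Finset.mem_univ, if_true, Real.sqrt_one]
  · intro x hx
    set s := Real.sqrt n with hs_def
    have hs : 0 < s := Real.sqrt_pos.mpr (by positivity)
    set a : Fin n → ℝ := fun j => s⁻¹ * x j with ha_def
    have ha : e2 a = 1 := by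
      rw [ha_def, e2_smul, hx, abs_of_pos (by positivity), inv_mul_cancel₀ hs.ne']
    obtain ⟨b, hbN, hdist⟩ := hnet a ha
    have hb1 : e2 b = 1 := hunit b hbN
    -- inner product bound
    have hsum_a : ∑ j, a j ^ 2 = 1 := by rw [← e2_sq, ha]; norm_num
    have hsum_b : ∑ j, b j ^ 2 = 1 := by rw [← e2_sq, hb1]; norm_num
    have hexp : ∑ j, (a j - b j) ^ 2
        = (∑ j, a j ^ 2) - 2 * (∑ j, a j * b j) + ∑ j, b j ^ 2 := by
      rw [Finset.mul_sum, ← Finset.sum_sub_distrib, ← Finset.sum_add_distrib]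
      exact Finset.sum_congr rfl fun j _ => by ring
    have hdist_sq : ∑ j, (a j - b j) ^ 2 ≤ 1 / 4 := by
      have h1 : e2 (a - b) ^ 2 ≤ (1 / 2 : ℝ) ^ 2 := by
        apply pow_le_pow_left₀ (e2_nonneg _) hdist
      rw [e2_sq] at h1
      have : ∀ j, (a - b) j ^ 2 = (a j - b j) ^ 2 := fun j => rfl
      simp only [this] at h1
      linarith
    have hinner : (7 : ℝ) / 8 ≤ ∑ j, a j * b j := by
      rw [hexp, hsum_a, hsum_b] at hdist_sq; linarith
    refine ⟨b, hbN, ?_⟩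
    have hxa : ∀ j, x j = s * a j := by
      intro j; rw [ha_def]; field_simp
    have hkey : ∑ j, b j * x j = s * ∑ j, a j * b j := by
      rw [Finset.mul_sum]; congr 1; funext j; rw [hxa j]; ring
    have h2 : s / 2 ≤ ∑ j, b j * x j := by
      rw [hkey]
      calc s / 2 ≤ s * (7 / 8) := by nlinarith
        _ ≤ s * ∑ j, a j * b j := by
            exact mul_le_mul_of_nonneg_left hinner hs.le
    exact h2.trans (le_abs_self _)
end

section
/- Let n = 3k for a positive integer k, and let a ∈ ℝⁿ. Define ℓ_1 = ∑_{i=1}^{k} |a_i|, ℓ_2 = ∑_{i=k+1}^{2k} |a_i|, ℓ_3 = ∑_{i=2k+1}^{3k} |a_i|. If 2·max(ℓ_1, ℓ_2, ℓ_3) ≤ ℓ_1 + ℓ_2 + ℓ_3 (i.e., ℓ_1, ℓ_2, ℓ_3 form the side lengths of a triangle in the plane), then there exist unit vectors w_1, …, w_n ∈ ℝ² such that ∑_{j=1}^n a_j w_j = 0. In particular, the rank-2 constrained vector discrepancy of the 1×n matrix with row a is zero, and hence its Gaussian discrepancy is zero. -/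
open MeasureTheory ProbabilityTheory

/-- Rank-r constrained vector discrepancy. -/
noncomputable def discVr {m n : ℕ} (r : ℕ) (A : Matrix (Fin m) (Fin n) ℝ) : ℝ :=
  sInf { d | ∃ u : Fin n → (Fin r → ℝ), (∀ j, e2 (u j) = 1) ∧
    d = ⨆ i, e2 (fun k => ∑ j, A i j * u j k) }

/-- Gaussian discrepancy. -/
noncomputable def discG {m n : ℕ} (A : Matrix (Fin m) (Fin n) ℝ) : ℝ :=
  sInf { d | ∃ U : Matrix (Fin n) (Fin n) ℝ, (∀ j, e2 (U j) = 1) ∧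
    d = ∫ ξ, supNorm (A.mulVec (U.mulVec ξ)) ∂(stdGaussian n) }

lemma triangle_vectors (l₁ l₂ l₃ : ℝ) (h1 : 0 ≤ l₁) (h2 : 0 ≤ l₂) (h3 : 0 ≤ l₃)
    (t1 : l₁ ≤ l₂ + l₃) (t2 : l₂ ≤ l₁ + l₃) (t3 : l₃ ≤ l₁ + l₂) :
    ∃ v₁ v₂ v₃ : Fin 2 → ℝ,
      ((v₁ 0)^2 + (v₁ 1)^2 = 1) ∧ ((v₂ 0)^2 + (v₂ 1)^2 = 1) ∧ ((v₃ 0)^2 + (v₃ 1)^2 = 1) ∧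
      (∀ c, l₁ * v₁ c + l₂ * v₂ c + l₃ * v₃ c = 0) := by
  rcases eq_or_lt_of_le h1 with e1 | p1
  · refine ⟨![1,0], ![1,0], ![-1,0], by norm_num, by norm_num, by norm_num, ?_⟩
    intro c
    fin_cases c <;> simp <;> linarith
  rcases eq_or_lt_of_le h2 with e2 | p2
  · refine ⟨![1,0], ![1,0], ![-1,0], by norm_num, by norm_num, by norm_num, ?_⟩
    intro c
    fin_cases c <;> simp <;> linarith
  rcases eq_or_lt_of_le h3 with e3 | p3
  · refine ⟨![1,0], ![-1,0], ![1,0], by norm_num, by norm_num, by norm_num, ?_⟩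
    intro c
    fin_cases c <;> simp <;> linarith
  set c₂ : ℝ := (l₃^2 - l₁^2 - l₂^2)/(2*l₁*l₂) with hc₂
  set c₃ : ℝ := (l₂^2 - l₁^2 - l₃^2)/(2*l₁*l₃) with hc₃
  have hl1 : l₁ ≠ 0 := ne_of_gt p1
  have hl2 : l₂ ≠ 0 := ne_of_gt p2
  have hl3 : l₃ ≠ 0 := ne_of_gt p3
  have hc2sq : c₂^2 ≤ 1 := by
    have hnum : (l₃^2 - l₁^2 - l₂^2)^2 ≤ (2*l₁*l₂)^2 := by
      nlinarith [mul_nonneg (by linarith : (0:ℝ) ≤ l₁ + l₂ - l₃) (by linarith : (0:ℝ) ≤ l₁ + l₂ + l₃),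
        mul_nonneg (by linarith : (0:ℝ) ≤ l₃ - l₁ + l₂) (by linarith : (0:ℝ) ≤ l₃ + l₁ - l₂)]
    have hden : (0:ℝ) < (2*l₁*l₂)^2 := by positivity
    rw [hc₂, div_pow, div_le_one hden]
    exact hnum
  have hc3sq : c₃^2 ≤ 1 := by
    have hnum : (l₂^2 - l₁^2 - l₃^2)^2 ≤ (2*l₁*l₃)^2 := by
      nlinarith [mul_nonneg (by linarith : (0:ℝ) ≤ l₁ + l₃ - l₂) (by linarith : (0:ℝ) ≤ l₁ + l₂ + l₃),
        mul_nonneg (by linarith : (0:ℝ) ≤ l₂ - l₁ + l₃) (by linarith : (0:ℝ) ≤ l₂ + l₁ - l₃)]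
    have hden : (0:ℝ) < (2*l₁*l₃)^2 := by positivity
    rw [hc₃, div_pow, div_le_one hden]
    exact hnum
  set s₂ : ℝ := Real.sqrt (1 - c₂^2) with hs₂
  set s₃ : ℝ := Real.sqrt (1 - c₃^2) with hs₃
  have hs2sq : s₂^2 = 1 - c₂^2 := Real.sq_sqrt (by linarith)
  have hs3sq : s₃^2 = 1 - c₃^2 := Real.sq_sqrt (by linarith)
  refine ⟨![1,0], ![c₂,s₂], ![c₃,-s₃], by norm_num, by simp; linarith, by simp; linarith, ?_⟩
  have key : l₂ * s₂ = l₃ * s₃ := by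
    rw [hs₂, hs₃, ← Real.sqrt_sq h2, ← Real.sqrt_sq h3, ← Real.sqrt_mul (sq_nonneg l₂),
      ← Real.sqrt_mul (sq_nonneg l₃)]
    congr 1
    rw [hc₂, hc₃]
    field_simp
    ring
  intro c
  fin_cases c
  · simp only [Fin.zero_eta, Matrix.cons_val_zero]
    rw [hc₂, hc₃]
    field_simp
    ring
  · simp only [Fin.mk_one, Matrix.cons_val_one, Matrix.head_cons, Matrix.cons_val_zero]
    linarith

theorem stmt_10 {k : ℕ} (hk : 1 ≤ k) (a : Fin (3 * k) → ℝ)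
    (l₁ l₂ l₃ : ℝ)
    (hl₁ : l₁ = ∑ i : Fin (3 * k), if (i : ℕ) < k then |a i| else 0)
    (hl₂ : l₂ = ∑ i : Fin (3 * k), if k ≤ (i : ℕ) ∧ (i : ℕ) < 2 * k then |a i| else 0)
    (hl₃ : l₃ = ∑ i : Fin (3 * k), if 2 * k ≤ (i : ℕ) then |a i| else 0)
    (htri : 2 * max (max l₁ l₂) l₃ ≤ l₁ + l₂ + l₃) :
    (∃ w : Fin (3 * k) → (Fin 2 → ℝ), (∀ j, e2 (w j) = 1) ∧
      ∀ c : Fin 2, (∑ j, a j * w j c) = 0) ∧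
    discVr 2 (Matrix.of fun (_ : Fin 1) j => a j) = 0 ∧
    discG (Matrix.of fun (_ : Fin 1) j => a j) = 0 := by
  -- nonnegativity of the lengths
  have h1 : 0 ≤ l₁ := by
    rw [hl₁]; exact Finset.sum_nonneg fun i _ => by positivity
  have h2 : 0 ≤ l₂ := by
    rw [hl₂]; exact Finset.sum_nonneg fun i _ => by positivity
  have h3 : 0 ≤ l₃ := by
    rw [hl₃]; exact Finset.sum_nonneg fun i _ => by positivity
  -- triangle inequalities
  have t1 : l₁ ≤ l₂ + l₃ := by
    have := le_trans (le_max_left l₁ l₂) (le_max_left (max l₁ l₂) l₃); linarith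
  have t2 : l₂ ≤ l₁ + l₃ := by
    have := le_trans (le_max_right l₁ l₂) (le_max_left (max l₁ l₂) l₃); linarith
  have t3 : l₃ ≤ l₁ + l₂ := by
    have := le_max_right (max l₁ l₂) l₃; linarith
  obtain ⟨v₁, v₂, v₃, hv₁, hv₂, hv₃, hsum⟩ :=
    triangle_vectors l₁ l₂ l₃ h1 h2 h3 t1 t2 t3
  -- block direction
  set d : Fin (3 * k) → Fin 2 → ℝ :=
    fun j => if (j : ℕ) < k then v₁ else if (j : ℕ) < 2 * k then v₂ else v₃ with hd
  set w : Fin (3 * k) → Fin 2 → ℝ :=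
    fun j c => (if 0 ≤ a j then (1:ℝ) else -1) * d j c with hw
  have hdunit : ∀ j, (d j 0)^2 + (d j 1)^2 = 1 := by
    intro j
    rw [hd]
    by_cases hA : (j : ℕ) < k
    · simp [hA, hv₁]
    by_cases hB : (j : ℕ) < 2 * k
    · simp [hA, hB, hv₂]
    · simp [hA, hB, hv₃]
  have hwsq : ∀ j, (w j 0)^2 + (w j 1)^2 = 1 := by
    intro j
    rw [hw]
    by_cases hs : 0 ≤ a j
    · simp only [hs, if_true]; linear_combination hdunit j
    · simp only [hs, if_false]; linear_combination hdunit j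
  have hwe2 : ∀ j, e2 (w j) = 1 := by
    intro j
    rw [e2, Fin.sum_univ_two, hwsq j, Real.sqrt_one]
  -- the key cancellation
  have hzero : ∀ c : Fin 2, (∑ j, a j * w j c) = 0 := by
    intro c
    have step1 : ∀ j : Fin (3 * k), a j * w j c = |a j| * d j c := by
      intro j
      rw [hw]
      by_cases hs : 0 ≤ a j
      · simp only [hs, if_true]; rw [abs_of_nonneg hs]; ring
      · simp only [hs, if_false]; rw [abs_of_neg (lt_of_not_ge hs)]; ring
    have step2 : ∀ j : Fin (3 * k), |a j| * d j c =
        (if (j : ℕ) < k then |a j| else 0) * v₁ c +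
        (if k ≤ (j : ℕ) ∧ (j : ℕ) < 2 * k then |a j| else 0) * v₂ c +
        (if 2 * k ≤ (j : ℕ) then |a j| else 0) * v₃ c := by
      intro j
      rw [hd]
      by_cases hA : (j : ℕ) < k
      · have hA2 : ¬ (k ≤ (j : ℕ) ∧ (j : ℕ) < 2 * k) := by omega
        have hA3 : ¬ (2 * k ≤ (j : ℕ)) := by omega
        simp [hA, hA2, hA3]
      by_cases hB : (j : ℕ) < 2 * k
      · have hB2 : (k ≤ (j : ℕ) ∧ (j : ℕ) < 2 * k) := by omega
        have hB3 : ¬ (2 * k ≤ (j : ℕ)) := by omega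
        simp [hA, hB, hB2, hB3]
      · have hC2 : ¬ (k ≤ (j : ℕ) ∧ (j : ℕ) < 2 * k) := by omega
        have hC3 : 2 * k ≤ (j : ℕ) := by omega
        simp [hA, hB, hC2, hC3]
    calc ∑ j, a j * w j c = ∑ j : Fin (3 * k), ((if (j : ℕ) < k then |a j| else 0) * v₁ c +
        (if k ≤ (j : ℕ) ∧ (j : ℕ) < 2 * k then |a j| else 0) * v₂ c +
        (if 2 * k ≤ (j : ℕ) then |a j| else 0) * v₃ c) := by
          refine Finset.sum_congr rfl fun j _ => ?_
          rw [step1 j, step2 j]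
      _ = (∑ j : Fin (3 * k), if (j : ℕ) < k then |a j| else 0) * v₁ c +
          (∑ j : Fin (3 * k), if k ≤ (j : ℕ) ∧ (j : ℕ) < 2 * k then |a j| else 0) * v₂ c +
          (∑ j : Fin (3 * k), if 2 * k ≤ (j : ℕ) then |a j| else 0) * v₃ c := by
          rw [Finset.sum_add_distrib, Finset.sum_add_distrib, ← Finset.sum_mul,
            ← Finset.sum_mul, ← Finset.sum_mul]
      _ = l₁ * v₁ c + l₂ * v₂ c + l₃ * v₃ c := by rw [← hl₁, ← hl₂, ← hl₃]
      _ = 0 := hsum c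
  have hi01 : (⟨0, by omega⟩ : Fin (3 * k)) ≠ (⟨1, by omega⟩ : Fin (3 * k)) := by
    simp [Fin.ext_iff]
  have hi10 : (⟨1, by omega⟩ : Fin (3 * k)) ≠ (⟨0, by omega⟩ : Fin (3 * k)) := Ne.symm hi01
  refine ⟨⟨w, hwe2, hzero⟩, ?_, ?_⟩
  -- discVr = 0
  · have hmem : (0:ℝ) ∈ { d | ∃ u : Fin (3 * k) → (Fin 2 → ℝ), (∀ j, e2 (u j) = 1) ∧
        d = ⨆ i, e2 (fun c => ∑ j, (Matrix.of fun (_ : Fin 1) j => a j) i j * u j c) } := by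
      refine ⟨w, hwe2, ?_⟩
      rw [ciSup_unique]
      have hfn : (fun c => ∑ j, (Matrix.of fun (_ : Fin 1) j => a j) (default : Fin 1) j * w j c)
          = fun _ : Fin 2 => (0:ℝ) := by
        funext c
        simpa using hzero c
      rw [hfn]
      simp [e2]
    have hlb : ∀ d ∈ { d | ∃ u : Fin (3 * k) → (Fin 2 → ℝ), (∀ j, e2 (u j) = 1) ∧
        d = ⨆ i, e2 (fun c => ∑ j, (Matrix.of fun (_ : Fin 1) j => a j) i j * u j c) }, (0:ℝ) ≤ d := by
      rintro d ⟨u, hu, rfl⟩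
      rw [ciSup_unique]
      exact Real.sqrt_nonneg _
    exact le_antisymm (csInf_le ⟨0, hlb⟩ hmem) (le_csInf ⟨0, hmem⟩ hlb)
  -- discG = 0
  · set i0 : Fin (3 * k) := ⟨0, by omega⟩ with hi0
    set i1 : Fin (3 * k) := ⟨1, by omega⟩ with hi1
    set U : Matrix (Fin (3 * k)) (Fin (3 * k)) ℝ :=
      Matrix.of fun j l => if l = i0 then w j 0 else if l = i1 then w j 1 else 0 with hU
    have hUunit : ∀ j, e2 (U j) = 1 := by
      intro j
      have hterm : ∀ l : Fin (3 * k), (U j l)^2 =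
          (if l = i0 then (w j 0)^2 else 0) + (if l = i1 then (w j 1)^2 else 0) := by
        intro l
        by_cases h0 : l = i0
        · have h1 : l ≠ i1 := by rw [h0]; exact hi01
          simp [hU, h0, h1, hi01]
        · by_cases h1 : l = i1
          · simp [hU, h0, h1, hi10]
          · simp [hU, h0, h1]
      rw [e2]
      rw [Finset.sum_congr rfl fun l _ => hterm l, Finset.sum_add_distrib]
      simp only [Finset.sum_ite_eq', Finset.mem_univ, if_true]
      rw [hwsq j, Real.sqrt_one]
    have hrow : ∀ ξ : Fin (3 * k) → ℝ, ∀ j : Fin (3 * k),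
        U.mulVec ξ j = w j 0 * ξ i0 + w j 1 * ξ i1 := by
      intro ξ j
      have hterm : ∀ l : Fin (3 * k), U j l * ξ l =
          (if l = i0 then w j 0 * ξ i0 else 0) + (if l = i1 then w j 1 * ξ i1 else 0) := by
        intro l
        by_cases h0 : l = i0
        · have h1 : l ≠ i1 := by rw [h0]; exact hi01
          simp [hU, h0, h1, hi01]
        · by_cases h1 : l = i1
          · simp [hU, h0, h1, hi10]
          · simp [hU, h0, h1]
      rw [Matrix.mulVec, dotProduct]
      rw [Finset.sum_congr rfl fun l _ => hterm l, Finset.sum_add_distrib]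
      simp [Finset.sum_ite_eq']
    have hint : ∀ ξ : Fin (3 * k) → ℝ,
        supNorm ((Matrix.of fun (_ : Fin 1) j => a j).mulVec (U.mulVec ξ)) = 0 := by
      intro ξ
      rw [supNorm, ciSup_unique]
      have hv : (Matrix.of fun (_ : Fin 1) j => a j).mulVec (U.mulVec ξ) (default : Fin 1) = 0 := by
        rw [Matrix.mulVec, dotProduct]
        have : ∀ j : Fin (3 * k), (Matrix.of fun (_ : Fin 1) j => a j) (default : Fin 1) j
            * (U.mulVec ξ) j = (a j * w j 0) * ξ i0 + (a j * w j 1) * ξ i1 := by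
          intro j
          rw [hrow ξ j]
          simp [Matrix.of_apply]
          ring
        rw [Finset.sum_congr rfl fun j _ => this j, Finset.sum_add_distrib,
          ← Finset.sum_mul, ← Finset.sum_mul, hzero 0, hzero 1]
        ring
      rw [hv, abs_zero]
    have hmem : (0:ℝ) ∈ { d | ∃ U : Matrix (Fin (3 * k)) (Fin (3 * k)) ℝ, (∀ j, e2 (U j) = 1) ∧
        d = ∫ ξ, supNorm ((Matrix.of fun (_ : Fin 1) j => a j).mulVec (U.mulVec ξ))
        ∂(stdGaussian (3 * k)) } := by
      refine ⟨U, hUunit, ?_⟩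
      have : (fun ξ => supNorm ((Matrix.of fun (_ : Fin 1) j => a j).mulVec (U.mulVec ξ)))
          = fun _ => (0:ℝ) := funext hint
      rw [this, integral_zero]
    have hlb : ∀ d ∈ { d | ∃ U : Matrix (Fin (3 * k)) (Fin (3 * k)) ℝ, (∀ j, e2 (U j) = 1) ∧
        d = ∫ ξ, supNorm ((Matrix.of fun (_ : Fin 1) j => a j).mulVec (U.mulVec ξ))
        ∂(stdGaussian (3 * k)) }, (0:ℝ) ≤ d := by
      rintro d ⟨V, hV, rfl⟩
      refine integral_nonneg fun ξ => ?_
      rw [supNorm, ciSup_unique]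
      exact abs_nonneg _
    exact le_antisymm (csInf_le ⟨0, hlb⟩ hmem) (le_csInf ⟨0, hmem⟩ hlb)
end

section
/- (Vector Komlós theorem.) For every matrix A ∈ ℝ^{m×n} whose columns all have Euclidean norm at most 1, there exist unit vectors u_1, …, u_n ∈ ℝⁿ such that max_{i∈[m]} ‖∑_{j=1}^n A_{i,j} u_j‖₂ ≤ 1; that is, disc_v(A) ≤ 1. -/
open Finset Matrix

theorem dual_lemma {m n : ℕ} (A : Matrix (Fin m) (Fin n) ℝ)
    (hcol : ∀ j, ∑ i, A i j ^ 2 ≤ 1)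
    (p : Fin m → ℝ) (hp : ∀ i, 0 < p i) (q : Fin n → ℝ)
    (hq : ∀ v : Fin n → ℝ, ∑ j, q j * v j ^ 2 ≤ ∑ i, p i * (∑ j, A i j * v j) ^ 2) :
    ∑ j, q j ≤ ∑ i, p i := by
  classical
  set C : Matrix (Fin m) {j : Fin n // 0 < q j} ℝ :=
    fun i j => Real.sqrt (p i) * A i j.1 / Real.sqrt (q j.1) with hCdef
  -- Key 1 : C^T C ⪰ I as quadratic forms
  have h1 : ∀ x : {j : Fin n // 0 < q j} → ℝ,
      ∑ j, x j ^ 2 ≤ ∑ i, ((C *ᵥ x) i) ^ 2 := by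
    intro x
    set v : Fin n → ℝ := fun j => if h : 0 < q j then x ⟨j, h⟩ / Real.sqrt (q j) else 0 with hv
    have hL : ∑ j, q j * v j ^ 2 = ∑ j, x j ^ 2 := by
      calc ∑ j, q j * v j ^ 2
          = ∑ j ∈ Finset.univ.filter (fun j => 0 < q j), q j * v j ^ 2 := by
            refine (Finset.sum_filter_of_ne ?_).symm
            intro j _ hne
            by_contra h
            exact hne (by simp [hv, h])
        _ = ∑ j : {j : Fin n // 0 < q j}, q j.1 * v j.1 ^ 2 :=
            Finset.sum_subtype _ (fun j => by simp) _
        _ = ∑ j, x j ^ 2 := by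
            refine Finset.sum_congr rfl fun j _ => ?_
            rw [hv]
            simp only [dif_pos j.2]
            rw [div_pow, Real.sq_sqrt j.2.le]
            rw [mul_comm, div_mul_cancel₀ _ j.2.ne']
    have hR : ∀ i, p i * (∑ j, A i j * v j) ^ 2 = ((C *ᵥ x) i) ^ 2 := by
      intro i
      have hinner : ∑ j, A i j * v j
          = ∑ j : {j : Fin n // 0 < q j}, A i j.1 * (x j / Real.sqrt (q j.1)) := by
        calc ∑ j, A i j * v j
            = ∑ j ∈ Finset.univ.filter (fun j => 0 < q j), A i j * v j := by
              refine (Finset.sum_filter_of_ne ?_).symm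
              intro j _ hne
              by_contra h
              exact hne (by simp [hv, h])
          _ = ∑ j : {j : Fin n // 0 < q j}, A i j.1 * v j.1 :=
              Finset.sum_subtype _ (fun j => by simp) _
          _ = ∑ j : {j : Fin n // 0 < q j}, A i j.1 * (x j / Real.sqrt (q j.1)) := by
              refine Finset.sum_congr rfl fun j _ => ?_
              rw [hv]
              simp only [dif_pos j.2]
      have : (C *ᵥ x) i = Real.sqrt (p i) * ∑ j, A i j * v j := by
        rw [hinner, Matrix.mulVec, Finset.mul_sum]
        apply Finset.sum_congr rfl
        intro j _
        simp only [hCdef, dotProduct]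
        ring
      rw [this, mul_pow, Real.sq_sqrt (hp i).le]
    calc ∑ j, x j ^ 2 = ∑ j, q j * v j ^ 2 := hL.symm
      _ ≤ ∑ i, p i * (∑ j, A i j * v j) ^ 2 := hq v
      _ = ∑ i, ((C *ᵥ x) i) ^ 2 := by exact Finset.sum_congr rfl fun i _ => hR i
  -- the Gram matrix H = Cᵀ * C is positive definite
  set H : Matrix {j : Fin n // 0 < q j} {j : Fin n // 0 < q j} ℝ := Cᵀ * C with hHdef
  have hquad : ∀ x, x ⬝ᵥ (H *ᵥ x) = ∑ i, ((C *ᵥ x) i) ^ 2 := by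
    intro x
    rw [hHdef, ← Matrix.mulVec_mulVec, Matrix.dotProduct_mulVec, Matrix.vecMul_transpose]
    simp [dotProduct, sq]
  have hH : H.PosDef := by
    rw [Matrix.posDef_iff_dotProduct_mulVec]
    constructor
    · ext j k
      simp only [Matrix.conjTranspose_apply, Matrix.mul_apply, star_trivial, hHdef,
        Matrix.transpose_apply]
      exact Finset.sum_congr rfl fun i _ => mul_comm _ _
    · intro x hx
      simp only [star_trivial]
      rw [hquad]
      have hxpos : 0 < ∑ j, x j ^ 2 := by
        have : ∃ j, x j ≠ 0 := Function.ne_iff.mp hx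
        obtain ⟨j0, hj0⟩ := this
        refine Finset.sum_pos' (fun j _ => sq_nonneg _) ⟨j0, Finset.mem_univ _, ?_⟩
        positivity
      exact lt_of_lt_of_le hxpos (h1 x)
  have hdet : IsUnit H.det := hH.det_pos.ne'.isUnit
  set X : Matrix {j : Fin n // 0 < q j} (Fin m) ℝ := H⁻¹ * Cᵀ with hXdef
  have hXC : X * C = 1 := by
    rw [hXdef, Matrix.mul_assoc, ← hHdef, Matrix.nonsing_inv_mul H hdet]
  -- contraction property of X
  have hcontr : ∀ y : Fin m → ℝ, ∑ j, ((X *ᵥ y) j) ^ 2 ≤ ∑ i, y i ^ 2 := by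
    intro y
    set z : {j : Fin n // 0 < q j} → ℝ := X *ᵥ y with hz
    have hHz : H *ᵥ z = Cᵀ *ᵥ y := by
      rw [hz, hXdef, Matrix.mulVec_mulVec, ← Matrix.mul_assoc,
        Matrix.mul_nonsing_inv H hdet, Matrix.one_mul]
    set s : ℝ := ∑ i, ((C *ᵥ z) i) ^ 2 with hs
    have hs0 : 0 ≤ s := Finset.sum_nonneg fun i _ => sq_nonneg _
    have hseq : s = ∑ i, ((C *ᵥ z) i) * y i := by
      have e1 : s = (C *ᵥ z) ⬝ᵥ (C *ᵥ z) := by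
        simp [hs, dotProduct, sq]
      have e2 : (C *ᵥ z) ⬝ᵥ (C *ᵥ z) = z ⬝ᵥ (H *ᵥ z) := by
        rw [hquad z]
        simp [dotProduct, sq]
      have e3 : z ⬝ᵥ (Cᵀ *ᵥ y) = (C *ᵥ z) ⬝ᵥ y := by
        rw [Matrix.dotProduct_mulVec, Matrix.vecMul_transpose]
      rw [e1, e2, hHz, e3, dotProduct]
    have hCS : s ^ 2 ≤ s * ∑ i, y i ^ 2 := by
      calc s ^ 2 = (∑ i, ((C *ᵥ z) i) * y i) ^ 2 := by rw [← hseq]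
        _ ≤ (∑ i, ((C *ᵥ z) i) ^ 2) * ∑ i, y i ^ 2 :=
            Finset.sum_mul_sq_le_sq_mul_sq _ _ _
        _ = s * ∑ i, y i ^ 2 := by rw [← hs]
    have hzs : ∑ j, z j ^ 2 ≤ s := h1 z
    rcases eq_or_lt_of_le hs0 with h0 | hpos
    · calc ∑ j, z j ^ 2 ≤ s := hzs
        _ = 0 := h0.symm
        _ ≤ ∑ i, y i ^ 2 := Finset.sum_nonneg fun i _ => sq_nonneg _
    · have : s ≤ ∑ i, y i ^ 2 := by
        have := hCS
        rw [sq] at this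
        exact le_of_mul_le_mul_left this hpos
      exact hzs.trans this
  -- entrywise consequence : q j ≤ ∑ i, p i * (X j i)^2
  have hqj : ∀ j : {j : Fin n // 0 < q j}, q j.1 ≤ ∑ i, p i * (X j i) ^ 2 := by
    intro j
    have hone : ∑ i, X j i * C i j = 1 := by
      have := congrFun (congrFun hXC j) j
      rw [Matrix.mul_apply] at this
      rw [this, Matrix.one_apply_eq]
    have hsplit : ∀ i, X j i * C i j
        = (Real.sqrt (p i) * X j i) * (C i j / Real.sqrt (p i)) := by
      intro i
      have hpi : Real.sqrt (p i) ≠ 0 := (Real.sqrt_pos.mpr (hp i)).ne'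
      field_simp
    have hCS2 : 1 ≤ (∑ i, p i * (X j i) ^ 2) * (∑ i, (C i j) ^ 2 / p i) := by
      have h2 := Finset.sum_mul_sq_le_sq_mul_sq Finset.univ
        (fun i => Real.sqrt (p i) * X j i) (fun i => C i j / Real.sqrt (p i))
      have e1 : ∑ i, (Real.sqrt (p i) * X j i) * (C i j / Real.sqrt (p i)) = 1 := by
        rw [← hone]; exact Finset.sum_congr rfl fun i _ => (hsplit i).symm
      have e2 : ∀ i, (Real.sqrt (p i) * X j i) ^ 2 = p i * (X j i) ^ 2 := fun i => by
        rw [mul_pow, Real.sq_sqrt (hp i).le]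
      have e3 : ∀ i, (C i j / Real.sqrt (p i)) ^ 2 = (C i j) ^ 2 / p i := fun i => by
        rw [div_pow, Real.sq_sqrt (hp i).le]
      rw [e1] at h2
      calc (1:ℝ) = 1 ^ 2 := (one_pow 2).symm
        _ ≤ (∑ i, (Real.sqrt (p i) * X j i) ^ 2) * (∑ i, (C i j / Real.sqrt (p i)) ^ 2) := h2
        _ = (∑ i, p i * (X j i) ^ 2) * (∑ i, (C i j) ^ 2 / p i) := by
            rw [Finset.sum_congr rfl fun i _ => e2 i, Finset.sum_congr rfl fun i _ => e3 i]
    have hC2 : ∑ i, (C i j) ^ 2 / p i ≤ 1 / q j.1 := by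
      have : ∀ i, (C i j) ^ 2 / p i = A i j.1 ^ 2 / q j.1 := by
        intro i
        rw [hCdef]
        simp only
        rw [div_pow, mul_pow, Real.sq_sqrt (hp i).le, Real.sq_sqrt j.2.le]
        rw [div_right_comm, mul_div_cancel_left₀ _ (hp i).ne']
      rw [Finset.sum_congr rfl fun i _ => this i, ← Finset.sum_div]
      gcongr
      · exact j.2.le
      · exact hcol j.1
    have ha : 0 ≤ ∑ i, p i * (X j i) ^ 2 :=
      Finset.sum_nonneg fun i _ => mul_nonneg (hp i).le (sq_nonneg _)
    have h3 : 1 ≤ (∑ i, p i * (X j i) ^ 2) * (1 / q j.1) :=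
      hCS2.trans (mul_le_mul_of_nonneg_left hC2 ha)
    rw [mul_one_div] at h3
    exact (one_le_div j.2).mp h3
  -- final assembly
  have step1 : ∑ j, q j ≤ ∑ j : {j : Fin n // 0 < q j}, q j.1 := by
    have hsplit := (Finset.sum_filter_add_sum_filter_not Finset.univ (fun j => 0 < q j) q).symm
    have hneg : ∑ j ∈ Finset.univ.filter (fun j => ¬ 0 < q j), q j ≤ 0 :=
      Finset.sum_nonpos fun j hj => le_of_not_gt (Finset.mem_filter.mp hj).2
    have hpos : ∑ j ∈ Finset.univ.filter (fun j => 0 < q j), q j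
        = ∑ j : {j : Fin n // 0 < q j}, q j.1 :=
      Finset.sum_subtype _ (fun j => by simp) _
    calc ∑ j, q j = _ + _ := hsplit
      _ ≤ ∑ j ∈ Finset.univ.filter (fun j => 0 < q j), q j + 0 := by
          exact add_le_add_right hneg _
      _ = ∑ j : {j : Fin n // 0 < q j}, q j.1 := by rw [add_zero, hpos]
  have step2 : ∑ j : {j : Fin n // 0 < q j}, q j.1
      ≤ ∑ j : {j : Fin n // 0 < q j}, ∑ i, p i * (X j i) ^ 2 :=
    Finset.sum_le_sum fun j _ => hqj j
  have step3 : ∑ j : {j : Fin n // 0 < q j}, ∑ i, p i * (X j i) ^ 2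
      = ∑ i, p i * ∑ j : {j : Fin n // 0 < q j}, (X j i) ^ 2 := by
    rw [Finset.sum_comm]
    exact Finset.sum_congr rfl fun i _ => by rw [Finset.mul_sum]
  have step4 : ∀ i, ∑ j : {j : Fin n // 0 < q j}, (X j i) ^ 2 ≤ 1 := by
    intro i
    have := hcontr (Pi.single i 1)
    have hXv : ∀ j, (X *ᵥ Pi.single i 1) j = X j i := by
      intro j
      rw [Matrix.mulVec, dotProduct]
      rw [Finset.sum_eq_single i]
      · simp
      · intro b _ hb; simp [Pi.single_apply, hb]
      · intro h; exact absurd (Finset.mem_univ i) h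
    have hy : ∑ i', (Pi.single i 1 : Fin m → ℝ) i' ^ 2 = 1 := by
      rw [Finset.sum_eq_single i]
      · simp
      · intro b _ hb; simp [Pi.single_apply, hb]
      · intro h; exact absurd (Finset.mem_univ i) h
    calc ∑ j : {j : Fin n // 0 < q j}, (X j i) ^ 2
        = ∑ j, ((X *ᵥ Pi.single i 1) j) ^ 2 :=
          Finset.sum_congr rfl fun j _ => by rw [hXv j]
      _ ≤ ∑ i', (Pi.single i 1 : Fin m → ℝ) i' ^ 2 := this
      _ = 1 := hy
  calc ∑ j, q j ≤ ∑ j : {j : Fin n // 0 < q j}, q j.1 := step1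
    _ ≤ ∑ j : {j : Fin n // 0 < q j}, ∑ i, p i * (X j i) ^ 2 := step2
    _ = ∑ i, p i * ∑ j : {j : Fin n // 0 < q j}, (X j i) ^ 2 := step3
    _ ≤ ∑ i, p i * 1 := Finset.sum_le_sum fun i _ =>
        mul_le_mul_of_nonneg_left (step4 i) (hp i).le
    _ = ∑ i, p i := by simp


variable {m n : ℕ}

lemma cont_entry {n : ℕ} (j k : Fin n) :
    Continuous (fun X : Matrix (Fin n) (Fin n) ℝ => X j k) :=
  (continuous_apply k).comp (continuous_apply (A := fun _ : Fin n => Fin n → ℝ) j)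

-- quadratic form evaluation helpers
lemma quad_single (X : Matrix (Fin n) (Fin n) ℝ) (j : Fin n) :
    ∑ a, ∑ b, (Pi.single j 1 : Fin n → ℝ) a * X a b * (Pi.single j 1 : Fin n → ℝ) b
      = X j j := by
  rw [Finset.sum_eq_single j]
  · rw [Finset.sum_eq_single j] <;> simp +contextual [Pi.single_apply]
  · intro a _ ha
    simp [Pi.single_apply, ha]
  · simp
lemma quad_pair (X : Matrix (Fin n) (Fin n) ℝ) (j k : Fin n) (hjk : j ≠ k) (ε : ℝ) :
    ∑ a, ∑ b, (fun a => if a = j then 1 else if a = k then ε else 0 : Fin n → ℝ) a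
      * X a b * (fun b => if b = j then 1 else if b = k then ε else 0 : Fin n → ℝ) b
      = X j j + ε * X j k + ε * X k j + ε ^ 2 * X k k := by
  have hinner : ∀ a, ∑ b, X a b * (if b = j then 1 else if b = k then ε else 0)
      = X a j + ε * X a k := by
    intro a
    have : ∀ b, X a b * (if b = j then 1 else if b = k then ε else 0)
        = (if b = j then X a b else 0) + (if b = k then ε * X a b else 0) := by
      intro b
      by_cases hb : b = j
      · subst hb
        have : b ≠ k := hjk
        simp [this]
      · by_cases hb' : b = k
        · subst hb'
          have : ¬ (b = j) := hb
          simp [this, mul_comm]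
        · simp [hb, hb']
    rw [Finset.sum_congr rfl fun b _ => this b, Finset.sum_add_distrib]
    simp
  have houter : ∀ a, (if a = j then (1:ℝ) else if a = k then ε else 0) * (X a j + ε * X a k)
      = (if a = j then X a j + ε * X a k else 0)
        + (if a = k then ε * (X a j + ε * X a k) else 0) := by
    intro a
    by_cases ha : a = j
    · subst ha
      have : a ≠ k := hjk
      simp [this]
    · by_cases ha' : a = k
      · subst ha'
        have : ¬ (a = j) := ha
        simp [this]
      · simp [ha, ha']
  calc ∑ a, ∑ b, _ * X a b * _
      = ∑ a, (if a = j then (1:ℝ) else if a = k then ε else 0) * (X a j + ε * X a k) := by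
        refine Finset.sum_congr rfl fun a _ => ?_
        rw [← hinner a, Finset.mul_sum]
        exact Finset.sum_congr rfl fun b _ => by ring
    _ = X j j + ε * X j k + ε * X k j + ε ^ 2 * X k k := by
        rw [Finset.sum_congr rfl fun a _ => houter a, Finset.sum_add_distrib]
        simp [hjk]
        ring


theorem exists_goodX (A : Matrix (Fin m) (Fin n) ℝ)
    (hcol : ∀ j, ∑ i, A i j ^ 2 ≤ 1) :
    ∃ X : Matrix (Fin n) (Fin n) ℝ, (∀ j k, X j k = X k j) ∧
      (∀ v : Fin n → ℝ, 0 ≤ ∑ j, ∑ k, v j * X j k * v k) ∧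
      (∀ j, X j j = 1) ∧ (∀ i, ∑ j, ∑ k, A i j * A i k * X j k ≤ 1) := by
  classical
  set S : Set (Matrix (Fin n) (Fin n) ℝ) :=
    {X | (∀ j k, X j k = X k j) ∧ (∀ v : Fin n → ℝ, 0 ≤ ∑ j, ∑ k, v j * X j k * v k)
       ∧ ∑ j, X j j ≤ (n : ℝ)} with hSdef
  set G : Matrix (Fin n) (Fin n) ℝ → (Fin n → ℝ) × (Fin m → ℝ) :=
    fun X => (fun j => X j j, fun i => ∑ j, ∑ k, A i j * A i k * X j k) with hGdef
  set K : Set ((Fin n → ℝ) × (Fin m → ℝ)) := G '' S with hKdef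
  set T : Set ((Fin n → ℝ) × (Fin m → ℝ)) :=
    {z | (∀ j, z.1 j = 1) ∧ ∀ i, z.2 i ≤ 1} with hTdef
  have hSconv : Convex ℝ S := by
    intro X hX Y hY a b ha hb hab
    refine ⟨fun j k => ?_, fun v => ?_, ?_⟩
    · simp only [Matrix.add_apply, Matrix.smul_apply, Pi.add_apply, Pi.smul_apply, smul_eq_mul]
      rw [hX.1 j k, hY.1 j k]
    · have : ∀ j k, v j * (a • X + b • Y) j k * v k
          = a * (v j * X j k * v k) + b * (v j * Y j k * v k) := by
        intro j k
        simp only [Matrix.add_apply, Matrix.smul_apply, Pi.add_apply, Pi.smul_apply, smul_eq_mul]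
        ring
      calc (0:ℝ) ≤ a * (∑ j, ∑ k, v j * X j k * v k) + b * (∑ j, ∑ k, v j * Y j k * v k) :=
            add_nonneg (mul_nonneg ha (hX.2.1 v)) (mul_nonneg hb (hY.2.1 v))
        _ = ∑ j, ∑ k, v j * (a • X + b • Y) j k * v k := by
            rw [Finset.mul_sum, Finset.mul_sum, ← Finset.sum_add_distrib]
            refine Finset.sum_congr rfl fun j _ => ?_
            rw [Finset.mul_sum, Finset.mul_sum, ← Finset.sum_add_distrib]
            exact Finset.sum_congr rfl fun k _ => (this j k).symm
    · have : ∑ j, ((a • X + b • Y) j j) = a * ∑ j, X j j + b * ∑ j, Y j j := by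
        rw [Finset.mul_sum, Finset.mul_sum, ← Finset.sum_add_distrib]
        refine Finset.sum_congr rfl fun j _ => ?_
        simp only [Matrix.add_apply, Matrix.smul_apply, Pi.add_apply, Pi.smul_apply, smul_eq_mul]
      rw [this]
      calc a * ∑ j, X j j + b * ∑ j, Y j j ≤ a * n + b * n := by
            gcongr
            exacts [hX.2.2, hY.2.2]
        _ = (n:ℝ) := by rw [← add_mul, hab, one_mul]
  have hquadcont : ∀ v : Fin n → ℝ,
      Continuous (fun X : Matrix (Fin n) (Fin n) ℝ => ∑ j, ∑ k, v j * X j k * v k) := by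
    intro v
    refine continuous_finset_sum _ fun j _ => continuous_finset_sum _ fun k _ => ?_
    exact (continuous_const.mul (cont_entry j k)).mul continuous_const
  have hScomp : IsCompact S := by
    have hc1 : IsClosed {X : Matrix (Fin n) (Fin n) ℝ | ∀ j k, X j k = X k j} := by
      simp only [Set.setOf_forall]
      exact isClosed_iInter fun j => isClosed_iInter fun k =>
        isClosed_eq (cont_entry j k) (cont_entry k j)
    have hc2 : IsClosed {X : Matrix (Fin n) (Fin n) ℝ |
        ∀ v : Fin n → ℝ, 0 ≤ ∑ j, ∑ k, v j * X j k * v k} := by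
      rw [Set.setOf_forall]
      exact isClosed_iInter fun v => isClosed_le continuous_const (hquadcont v)
    have hc3 : IsClosed {X : Matrix (Fin n) (Fin n) ℝ | ∑ j, X j j ≤ (n:ℝ)} :=
      isClosed_le (continuous_finset_sum _ fun j _ => cont_entry j j) continuous_const
    have hSclosed : IsClosed S := by
      rw [hSdef, Set.setOf_and, Set.setOf_and]
      exact hc1.inter (hc2.inter hc3)
    have hdiag : ∀ X ∈ S, ∀ j, 0 ≤ X j j ∧ X j j ≤ (n:ℝ) := by
      intro X hX j
      have h0 : 0 ≤ X j j := by
        have := hX.2.1 (Pi.single j 1)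
        rwa [quad_single X j] at this
      refine ⟨h0, ?_⟩
      calc X j j ≤ ∑ k, X k k := Finset.single_le_sum
            (f := fun k => X k k) (fun k _ => by
              have := hX.2.1 (Pi.single k 1)
              rwa [quad_single X k] at this) (Finset.mem_univ j)
        _ ≤ (n:ℝ) := hX.2.2
    have hbox : S ⊆ (Set.univ : Set (Fin n)).pi fun _ =>
        (Set.univ : Set (Fin n)).pi fun _ => Set.Icc (-(n:ℝ)) (n:ℝ) := by
      intro X hX
      refine Set.mem_pi.mpr ?_
      intro j _
      rw [Set.mem_pi]
      intro k _
      rw [Set.mem_Icc]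
      by_cases hjk : j = k
      · subst hjk
        obtain ⟨h0, h1⟩ := hdiag X hX j
        constructor
        · linarith [show (0:ℝ) ≤ n from Nat.cast_nonneg n]
        · exact h1
      · have hsym := hX.1 j k
        obtain ⟨hj0, hj1⟩ := hdiag X hX j
        obtain ⟨hk0, hk1⟩ := hdiag X hX k
        have hplus := hX.2.1 (fun a => if a = j then 1 else if a = k then (1:ℝ) else 0)
        have hminus := hX.2.1 (fun a => if a = j then 1 else if a = k then (-1:ℝ) else 0)
        rw [quad_pair X j k hjk 1] at hplus
        rw [quad_pair X j k hjk (-1)] at hminus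
        have hkj : X k j = X j k := (hX.1 k j)
        rw [hkj] at hplus hminus
        constructor
        · nlinarith
        · nlinarith
    exact IsCompact.of_isClosed_subset
      (isCompact_univ_pi fun _ => isCompact_univ_pi fun _ => isCompact_Icc) hSclosed hbox
  have hGcont : Continuous G := by
    rw [hGdef]
    refine Continuous.prodMk ?_ ?_
    · exact continuous_pi fun j => cont_entry j j
    · exact continuous_pi fun i => continuous_finset_sum _ fun j _ =>
        continuous_finset_sum _ fun k _ => continuous_const.mul (cont_entry j k)
  have hGlin : ∀ (a b : ℝ) (X Y : Matrix (Fin n) (Fin n) ℝ),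
      G (a • X + b • Y) = a • G X + b • G Y := by
    intro a b X Y
    simp only [hGdef]
    refine Prod.ext ?_ ?_
    · funext j
      simp [Matrix.add_apply, Matrix.smul_apply, Pi.add_apply, Pi.smul_apply, smul_eq_mul]
    · funext i
      simp only [Prod.snd_add, Prod.smul_snd, Pi.add_apply, Pi.smul_apply, smul_eq_mul]
      rw [Finset.mul_sum, Finset.mul_sum, ← Finset.sum_add_distrib]
      refine Finset.sum_congr rfl fun j _ => ?_
      rw [Finset.mul_sum, Finset.mul_sum, ← Finset.sum_add_distrib]
      refine Finset.sum_congr rfl fun k _ => ?_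
      simp only [Matrix.add_apply, Matrix.smul_apply, Pi.add_apply, Pi.smul_apply, smul_eq_mul]
      ring
  have hKconv : Convex ℝ K := by
    intro z1 hz1 z2 hz2 a b ha hb hab
    obtain ⟨X, hXS, rfl⟩ := hz1
    obtain ⟨Y, hYS, rfl⟩ := hz2
    exact ⟨a • X + b • Y, hSconv hXS hYS ha hb hab, (hGlin a b X Y)⟩
  have hKcomp : IsCompact K := hScomp.image hGcont
  have hTconv : Convex ℝ T := by
    intro z1 hz1 z2 hz2 a b ha hb hab
    constructor
    · intro j
      simp only [Prod.fst_add, Prod.smul_fst, Pi.add_apply, Pi.smul_apply, smul_eq_mul,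
        hz1.1 j, hz2.1 j]
      rw [mul_one, mul_one, hab]
    · intro i
      simp only [Prod.snd_add, Prod.smul_snd, Pi.add_apply, Pi.smul_apply, smul_eq_mul]
      calc a * z1.2 i + b * z2.2 i ≤ a * 1 + b * 1 := by
            gcongr
            exacts [hz1.2 i, hz2.2 i]
        _ = 1 := by rw [mul_one, mul_one, hab]
  have hTclosed : IsClosed T := by
    have h1 : IsClosed {z : (Fin n → ℝ) × (Fin m → ℝ) | ∀ j, z.1 j = 1} := by
      rw [Set.setOf_forall]
      exact isClosed_iInter fun j =>
        isClosed_eq ((continuous_apply j).comp continuous_fst) continuous_const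
    have h2 : IsClosed {z : (Fin n → ℝ) × (Fin m → ℝ) | ∀ i, z.2 i ≤ 1} := by
      rw [Set.setOf_forall]
      exact isClosed_iInter fun i =>
        isClosed_le ((continuous_apply i).comp continuous_snd) continuous_const
    rw [hTdef, Set.setOf_and]
    exact h1.inter h2
  have hKT : ¬ Disjoint T K := by
    intro hdisj
    by_cases hn : n = 0
    · -- for n = 0 the zero matrix gives a common point
      have h0S : (0 : Matrix (Fin n) (Fin n) ℝ) ∈ S := by
        refine ⟨fun j k => rfl, fun v => ?_, ?_⟩
        · simp [Matrix.zero_apply]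
        · simp [Matrix.zero_apply]
      have h0T : G 0 ∈ T := by
        constructor
        · intro j
          exact absurd j.2 (by omega)
        · intro i
          simp [hGdef]
      exact Set.disjoint_left.mp hdisj h0T (Set.mem_image_of_mem G h0S)
    have hnpos : (0:ℝ) < n := by
      have : 0 < n := Nat.pos_of_ne_zero hn
      exact_mod_cast this
    obtain ⟨f, α, β, hfT, hαβ, hfK⟩ :=
      geometric_hahn_banach_closed_compact hTconv hTclosed hKconv hKcomp hdisj
    set φ : Fin n → ℝ := fun j => f ((Pi.single j 1 : Fin n → ℝ), (0 : Fin m → ℝ)) with hφdef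
    set ψ : Fin m → ℝ := fun i => f ((0 : Fin n → ℝ), (Pi.single i 1 : Fin m → ℝ)) with hψdef
    have hsingle : ∀ {L : ℕ} (w : Fin L → ℝ), ∑ j, w j • (Pi.single j 1 : Fin L → ℝ) = w := by
      intro L w
      funext k
      rw [Finset.sum_apply, Finset.sum_eq_single k]
      · simp
      · intro b _ hb
        simp [Pi.single_apply, Ne.symm hb]
      · intro h; exact absurd (Finset.mem_univ k) h
    have hfeval : ∀ z : (Fin n → ℝ) × (Fin m → ℝ),
        f z = ∑ j, z.1 j * φ j + ∑ i, z.2 i * ψ i := by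
      intro z
      have hdecomp : z = (∑ j, z.1 j • ((Pi.single j 1 : Fin n → ℝ), (0 : Fin m → ℝ)))
          + ∑ i, z.2 i • ((0 : Fin n → ℝ), (Pi.single i 1 : Fin m → ℝ)) := by
        refine Prod.ext ?_ ?_
        · simp only [Prod.fst_add, Prod.fst_sum, Prod.smul_fst, smul_zero]
          rw [hsingle z.1]
          simp
        · simp only [Prod.snd_add, Prod.snd_sum, Prod.smul_snd, smul_zero]
          rw [hsingle z.2]
          simp
      calc f z = f (_ + _) := by rw [← hdecomp]
        _ = ∑ j, z.1 j * φ j + ∑ i, z.2 i * ψ i := by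
            rw [map_add, map_sum, map_sum]
            congr 1
            · exact Finset.sum_congr rfl fun j _ => by rw [_root_.map_smul, smul_eq_mul]
            · exact Finset.sum_congr rfl fun i _ => by rw [_root_.map_smul, smul_eq_mul]
    have hT11 : (((fun _ => (1:ℝ)) : Fin n → ℝ), ((fun _ => (1:ℝ)) : Fin m → ℝ)) ∈ T :=
      ⟨fun j => rfl, fun i => le_refl 1⟩
    have hf0 : ∑ j, φ j + ∑ i, ψ i < α := by
      have h := hfT _ hT11
      rw [hfeval] at h
      simpa using h
    have hψpos : ∀ i, 0 ≤ ψ i := by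
      intro i
      by_contra hneg
      push_neg at hneg
      set f0 : ℝ := ∑ j, φ j + ∑ i', ψ i' with hf0def
      set t : ℝ := (α + 1 - f0) / (-ψ i) with htdef
      have htpos : 0 < t := div_pos (by linarith) (by linarith)
      set zz : (Fin n → ℝ) × (Fin m → ℝ) :=
        ((fun _ => (1:ℝ)), (fun i' => if i' = i then 1 - t else 1)) with hzzdef
      have hzzT : zz ∈ T := by
        refine ⟨fun j => rfl, fun i' => ?_⟩
        by_cases h : i' = i
        · have hz2 : zz.2 i' = 1 - t := by simp [hzzdef, h]
          rw [hz2]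
          linarith
        · simp [hzzdef, h]
      have h := hfT zz hzzT
      rw [hfeval] at h
      have hcomp : ∑ i', (if i' = i then 1 - t else 1) * ψ i' = ∑ i', ψ i' - t * ψ i := by
        have he : ∀ i', (if i' = i then 1 - t else 1) * ψ i'
            = ψ i' + (if i' = i then -t * ψ i' else 0) := by
          intro i'
          by_cases h' : i' = i
          · subst h'; simp; ring
          · simp [h']
        rw [Finset.sum_congr rfl fun i' _ => he i', Finset.sum_add_distrib,
          Finset.sum_ite_eq' Finset.univ i (fun i' => -t * ψ i')]
        simp
        ring
      simp only [hzzdef, one_mul] at h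
      rw [hcomp] at h
      have ht2 : t * (-ψ i) = α + 1 - f0 := by
        rw [htdef]
        exact div_mul_cancel₀ _ (neg_pos.mpr hneg).ne' 
      have : f0 + (α + 1 - f0) < α := by linarith
      linarith
    -- build the dual certificate
    set q : Fin n → ℝ := fun j => β / n - φ j with hqdef
    have hq : ∀ v : Fin n → ℝ, ∑ j, q j * v j ^ 2 ≤ ∑ i, ψ i * (∑ j, A i j * v j) ^ 2 := by
      intro v
      by_cases hv : v = 0
      · subst hv
        simp
      · have hc2 : 0 < ∑ j, v j ^ 2 := by
          obtain ⟨j0, hj0⟩ := Function.ne_iff.mp hv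
          refine Finset.sum_pos' (fun j _ => sq_nonneg _) ⟨j0, Finset.mem_univ _, lt_of_le_of_ne (sq_nonneg _) (Ne.symm (pow_ne_zero 2 hj0))⟩
        set c2 : ℝ := ∑ j, v j ^ 2 with hc2def
        set Xv : Matrix (Fin n) (Fin n) ℝ := fun j k => (n / c2) * (v j * v k) with hXvdef
        have hXvS : Xv ∈ S := by
          refine ⟨fun j k => by simp only [hXvdef]; ring, fun u => ?_, ?_⟩
          · have hid : ∑ j, ∑ k, u j * Xv j k * u k = (n / c2) * (∑ j, u j * v j) ^ 2 := by
              rw [sq, Finset.sum_mul_sum, Finset.mul_sum]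
              refine Finset.sum_congr rfl fun j _ => ?_
              rw [Finset.mul_sum]
              refine Finset.sum_congr rfl fun k _ => ?_
              simp only [hXvdef]
              ring
            rw [hid]
            positivity
          · have : ∑ j, Xv j j = (n / c2) * c2 := by
              rw [hc2def, Finset.mul_sum]
              refine Finset.sum_congr rfl fun j _ => ?_
              simp only [hXvdef]
              ring
            rw [this, div_mul_cancel₀ _ hc2.ne']
        have hβ := hfK (G Xv) (Set.mem_image_of_mem G hXvS)
        rw [hfeval] at hβ
        have h1 : ∑ j, (G Xv).1 j * φ j = (n / c2) * ∑ j, v j ^ 2 * φ j := by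
          rw [Finset.mul_sum]
          refine Finset.sum_congr rfl fun j _ => ?_
          simp only [hGdef, hXvdef]
          ring
        have h2 : ∑ i, (G Xv).2 i * ψ i
            = (n / c2) * ∑ i, ψ i * (∑ j, A i j * v j) ^ 2 := by
          rw [Finset.mul_sum]
          refine Finset.sum_congr rfl fun i _ => ?_
          have hin : (G Xv).2 i = (n / c2) * (∑ j, A i j * v j) ^ 2 := by
            simp only [hGdef]
            rw [sq, Finset.sum_mul_sum, Finset.mul_sum]
            refine Finset.sum_congr rfl fun j _ => ?_
            rw [Finset.mul_sum]
            refine Finset.sum_congr rfl fun k _ => ?_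
            simp only [hXvdef]
            ring
          rw [hin]
          ring
        rw [h1, h2] at hβ
        set Sφ : ℝ := ∑ j, v j ^ 2 * φ j with hSφdef
        set R : ℝ := ∑ i, ψ i * (∑ j, A i j * v j) ^ 2 with hRdef
        have hLHS : ∑ j, q j * v j ^ 2 = (β / n) * c2 - Sφ := by
          rw [hSφdef, hc2def, Finset.mul_sum, ← Finset.sum_sub_distrib]
          refine Finset.sum_congr rfl fun j _ => ?_
          simp only [hqdef]
          ring
        rw [hLHS]
        have hmul := mul_lt_mul_of_pos_left hβ hc2
        have hsimp : c2 * ((n / c2) * Sφ + (n / c2) * R) = n * Sφ + n * R := by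
          field_simp
        rw [hsimp] at hmul
        have hgoal : (β / n) * c2 - Sφ ≤ R := by
          rw [div_mul_eq_mul_div, sub_le_iff_le_add, div_le_iff₀ hnpos]
          nlinarith
        exact hgoal
    have hfinal : ∑ j, q j ≤ ∑ i, ψ i := by
      refine le_of_forall_pos_le_add ?_
      intro ε hε
      have hδ : 0 < ε / (m + 1) := by positivity
      have hyp2 : ∀ v : Fin n → ℝ,
          ∑ j, q j * v j ^ 2 ≤ ∑ i, (ψ i + ε / (m + 1)) * (∑ j, A i j * v j) ^ 2 := by
        intro v
        refine (hq v).trans (Finset.sum_le_sum fun i _ => ?_)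
        exact mul_le_mul_of_nonneg_right (by linarith [hδ.le]) (sq_nonneg _)
      have happ := dual_lemma A hcol (fun i => ψ i + ε / (m + 1))
        (fun i => by have := hψpos i; positivity) q hyp2
      have hm1 : (0:ℝ) < (m:ℝ) + 1 := by positivity
      calc ∑ j, q j ≤ ∑ i, (ψ i + ε / (m + 1)) := happ
        _ = (∑ i, ψ i) + m * (ε / (m + 1)) := by
            rw [Finset.sum_add_distrib, Finset.sum_const, Finset.card_univ, Fintype.card_fin,
              nsmul_eq_mul]
        _ ≤ (∑ i, ψ i) + ε := by
            have hle : (m:ℝ) * (ε / (m + 1)) ≤ ε := by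
              rw [← mul_div_assoc, div_le_iff₀ hm1]
              nlinarith
            linarith
    have hsumq : ∑ j, q j = β - ∑ j, φ j := by
      simp only [hqdef]
      rw [Finset.sum_sub_distrib, Finset.sum_const, Finset.card_univ, Fintype.card_fin,
        nsmul_eq_mul, mul_comm, div_mul_cancel₀ _ (ne_of_gt hnpos)]
    linarith [hf0, hαβ, hfinal, hsumq]

  obtain ⟨z, hzT, hzK⟩ := Set.not_disjoint_iff.mp hKT
  obtain ⟨X, hXS, hGX⟩ := hzK
  refine ⟨X, hXS.1, hXS.2.1, ?_, ?_⟩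
  · intro j
    have h := congrFun (congrArg Prod.fst hGX) j
    simp only [hGdef] at h
    rw [h]
    exact hzT.1 j
  · intro i
    have h := congrFun (congrArg Prod.snd hGX) i
    simp only [hGdef] at h
    rw [h]
    exact hzT.2 i



/-- Vector Komlós theorem (Nikolov): if all columns of A have Euclidean norm at most 1,
then there are unit vectors u_1, …, u_n with max_i ‖∑_j A_{i,j} u_j‖₂ ≤ 1;
that is, disc_v(A) ≤ 1. -/
theorem stmt_16 {m n : ℕ} (A : Matrix (Fin m) (Fin n) ℝ)
    (hcol : ∀ j, Real.sqrt (∑ i, A i j ^ 2) ≤ 1) :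
    (∃ u : Fin n → (Fin n → ℝ), (∀ j, e2 (u j) = 1) ∧
      ∀ i, e2 (fun k => ∑ j, A i j * u j k) ≤ 1) ∧
    discV A ≤ 1 := by
  classical
  have hcol' : ∀ j, ∑ i, A i j ^ 2 ≤ 1 := by
    intro j
    have h0 : 0 ≤ ∑ i, A i j ^ 2 := Finset.sum_nonneg fun i _ => sq_nonneg _
    calc ∑ i, A i j ^ 2 = (Real.sqrt (∑ i, A i j ^ 2)) ^ 2 := (Real.sq_sqrt h0).symm
      _ ≤ 1 ^ 2 := pow_le_pow_left₀ (Real.sqrt_nonneg _) (hcol j) 2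
      _ = 1 := one_pow 2
  obtain ⟨X, hsym, hpsd, hdiagX, hrow⟩ := exists_goodX A hcol'
  have hX : X.PosSemidef := by
    rw [Matrix.posSemidef_iff_dotProduct_mulVec]
    constructor
    · ext j k
      simp only [Matrix.conjTranspose_apply, star_trivial]
      exact hsym k j
    · intro x
      have he : star x ⬝ᵥ (X *ᵥ x) = ∑ j, ∑ k, x j * X j k * x k := by
        simp only [star_trivial, dotProduct, Matrix.mulVec]
        refine Finset.sum_congr rfl fun j _ => ?_
        simp only [dotProduct, Finset.mul_sum]
        exact Finset.sum_congr rfl fun k _ => by ring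
      rw [he]
      exact hpsd x
  obtain ⟨B, hB⟩ : ∃ B : Matrix (Fin n) (Fin n) ℝ, X = Bᴴ * B := by
    open scoped MatrixOrder in
    exact ⟨CFC.sqrt X, by rw [(CFC.sqrt_nonneg X).posSemidef.1.eq, CFC.sqrt_mul_sqrt_self X hX.nonneg]⟩
  have hXBentry : ∀ j k, X j k = ∑ l, B l j * B l k := by
    intro j k
    rw [hB, Matrix.mul_apply]
    exact Finset.sum_congr rfl fun l _ => by
      simp [Matrix.conjTranspose_apply]
  set u : Fin n → (Fin n → ℝ) := fun j => fun k => B k j with hu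
  have hunit : ∀ j, e2 (u j) = 1 := by
    intro j
    have hsum : ∑ k, (u j k) ^ 2 = X j j := by
      rw [hXBentry j j]
      exact Finset.sum_congr rfl fun l _ => sq (B l j)
    unfold e2
    rw [hsum, hdiagX j, Real.sqrt_one]
  have hrowb : ∀ i, ∑ k, (∑ j, A i j * u j k) ^ 2 ≤ 1 := by
    intro i
    have hexp : ∑ k, (∑ j, A i j * u j k) ^ 2 = ∑ j, ∑ j', A i j * A i j' * X j j' := by
      calc ∑ k, (∑ j, A i j * u j k) ^ 2
          = ∑ k, ∑ j, ∑ j', (A i j * u j k) * (A i j' * u j' k) := by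
            refine Finset.sum_congr rfl fun k _ => ?_
            rw [sq, Finset.sum_mul_sum]
        _ = ∑ j, ∑ k, ∑ j', (A i j * u j k) * (A i j' * u j' k) := Finset.sum_comm
        _ = ∑ j, ∑ j', ∑ k, (A i j * u j k) * (A i j' * u j' k) := by
            exact Finset.sum_congr rfl fun j _ => Finset.sum_comm
        _ = ∑ j, ∑ j', A i j * A i j' * X j j' := by
            refine Finset.sum_congr rfl fun j _ => Finset.sum_congr rfl fun j' _ => ?_
            rw [hXBentry j j', Finset.mul_sum]
            exact Finset.sum_congr rfl fun k _ => by ring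
    rw [hexp]
    exact hrow i
  have hle : ∀ i, e2 (fun k => ∑ j, A i j * u j k) ≤ 1 := by
    intro i
    unfold e2
    calc Real.sqrt (∑ k, (∑ j, A i j * u j k) ^ 2) ≤ Real.sqrt 1 :=
          Real.sqrt_le_sqrt (hrowb i)
      _ = 1 := Real.sqrt_one
  refine ⟨⟨u, hunit, hle⟩, ?_⟩
  -- the discV bound
  set d0 : ℝ := ⨆ i, e2 (fun k => ∑ j, A i j * u j k) with hd0
  have hmem : d0 ∈ { d | ∃ u : Fin n → (Fin n → ℝ), (∀ j, e2 (u j) = 1) ∧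
      d = ⨆ i, e2 (fun k => ∑ j, A i j * u j k) } := ⟨u, hunit, rfl⟩
  have hbdd : BddBelow { d | ∃ u : Fin n → (Fin n → ℝ), (∀ j, e2 (u j) = 1) ∧
      d = ⨆ i, e2 (fun k => ∑ j, A i j * u j k) } := by
    refine ⟨0, fun d hd => ?_⟩
    obtain ⟨u', hu', rfl⟩ := hd
    exact Real.iSup_nonneg fun i => Real.sqrt_nonneg _
  have hd01 : d0 ≤ 1 := Real.iSup_le (fun i => hle i) zero_le_one
  exact le_trans (csInf_le hbdd hmem) hd01
end
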